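/- arXiv:1912.00427 — 7 statements merged into one kernel-verified Lean document; each statement's English description precedes it below -/
import Mathlib

section
/- Let Q be a quiver of type A_n (n ≥ 1) and let F be an alien set for Q. Then the poset P_{Q^F} associated to the quiver Q^F is a poset of type A; that is, P_{Q^F} is a finite connected poset containing none of R1, R2, R3, and R_{4,n} (for every n ≥ 0) as a peak-subposet. -/
/-! ## Relation-based poset notions -/

/-- `x` and `y` are incomparable with respect to the relation `le`. -/
def RIncomp {α : Type*} (le : α → α → Prop) (x y : α) : Prop := ¬ le x y ∧ ¬ le y x

/-- The strict relation associated to `le`. -/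
def RLt {α : Type*} (le : α → α → Prop) (x y : α) : Prop := le x y ∧ ¬ le y x

/-- `z` is a maximal element with respect to `le`. -/
def RIsMax {α : Type*} (le : α → α → Prop) (z : α) : Prop := ∀ x, le z x → le x z

/-- `z` is a minimal element with respect to `le`. -/
def RIsMin {α : Type*} (le : α → α → Prop) (z : α) : Prop := ∀ x, le x z → le z x

/-- The down-cone `D(a) = {x | x ≤ a}`. -/
def RDown {α : Type*} (le : α → α → Prop) (a : α) : Set α := {x | le x a}

/-- The comparability graph of the relation `le`: vertices are the elements,
edges join comparable distinct elements. -/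
def RCompGraph {α : Type*} (le : α → α → Prop) : SimpleGraph α where
  Adj x y := x ≠ y ∧ (le x y ∨ le y x)
  symm := ⟨fun x y h => ⟨Ne.symm h.1, h.2.symm⟩⟩
  loopless := ⟨fun x h => h.1 rfl⟩

/-- Connectedness of the comparability graph. -/
def RConnected {α : Type*} (le : α → α → Prop) : Prop := (RCompGraph le).Connected

/-- `P` contains `R1` as a peak-subposet: a maximal element `z` together with three
distinct pairwise incomparable elements strictly below `z`. -/
def ContainsR1 {α : Type*} (le : α → α → Prop) : Prop :=
  ∃ z a b c : α, RIsMax le z ∧ a ≠ b ∧ a ≠ c ∧ b ≠ c ∧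
    RIncomp le a b ∧ RIncomp le a c ∧ RIncomp le b c ∧
    RLt le a z ∧ RLt le b z ∧ RLt le c z

/-- `P` contains `R2` as a peak-subposet: distinct maximal `z ≠ z'` and elements
`y < x` with `x < z` and `x < z'`. -/
def ContainsR2 {α : Type*} (le : α → α → Prop) : Prop :=
  ∃ z z' y x : α, RIsMax le z ∧ RIsMax le z' ∧ z ≠ z' ∧
    RLt le y x ∧ RLt le x z ∧ RLt le x z'

/-- `P` contains `R3` as a peak-subposet: three distinct maximal elements with a
common strict lower bound. -/
def ContainsR3 {α : Type*} (le : α → α → Prop) : Prop :=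
  ∃ z₁ z₂ z₃ x : α, RIsMax le z₁ ∧ RIsMax le z₂ ∧ RIsMax le z₃ ∧
    z₁ ≠ z₂ ∧ z₁ ≠ z₃ ∧ z₂ ≠ z₃ ∧
    RLt le x z₁ ∧ RLt le x z₂ ∧ RLt le x z₃

/-- `P` contains the crown `R_{4,n}` as a peak-subposet (with `m = n + 2` maximal
elements `z i` and `m` pairwise incomparable elements `x i`, indices mod `m`). -/
def ContainsCrown {α : Type*} (le : α → α → Prop) (n : ℕ) : Prop :=
  ∃ z x : Fin (n + 2) → α,
    Function.Injective z ∧ Function.Injective x ∧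
    (∀ j, RIsMax le (z j)) ∧
    (∀ i j, x i ≠ z j) ∧
    (∀ i j, i ≠ j → RIncomp le (x i) (x j)) ∧
    (∀ i j, RLt le (x i) (z j) ↔ (j = i ∨ j = i - 1))

/-- A poset (given by its order relation `le`) is of type `A`: it is connected and
contains none of `R1`, `R2`, `R3` and the crowns `R_{4,n}` as a peak-subposet. -/
def IsTypeA {α : Type*} (le : α → α → Prop) : Prop :=
  RConnected le ∧ ¬ ContainsR1 le ∧ ¬ ContainsR2 le ∧ ¬ ContainsR3 le ∧
    ∀ n : ℕ, ¬ ContainsCrown le n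

/-- The set of neighbors of a maximal element `z`: maximal elements `z' ≠ z` whose
down-cone meets the down-cone of `z`. -/
def NeighborSet {α : Type*} (le : α → α → Prop) (z : α) : Set α :=
  {z' | RIsMax le z' ∧ z' ≠ z ∧ (RDown le z ∩ RDown le z').Nonempty}

/-! ## Quivers of type `A_n` and alien sets -/

/-- A quiver of type `A_n`: vertices `Fin n`, and for each pair of consecutive
vertices exactly one arrow joining them (in one of the two orientations), and no
other arrows. -/
structure TypeAQuiver (n : ℕ) where
  arr : Fin n → Fin n → Prop
  adjacent : ∀ x y : Fin n, arr x y → (y.val = x.val + 1 ∨ x.val = y.val + 1)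
  exactlyOne : ∀ x y : Fin n, y.val = x.val + 1 → (arr x y ↔ ¬ arr y x)

/-- `z` is a sink: no arrow starts at `z`. -/
def IsSinkQ {n : ℕ} (Q : TypeAQuiver n) (z : Fin n) : Prop := ∀ y, ¬ Q.arr z y

/-- `z` is a source: no arrow ends at `z`. -/
def IsSourceQ {n : ℕ} (Q : TypeAQuiver n) (z : Fin n) : Prop := ∀ y, ¬ Q.arr y z

/-- `Supp I(z)`: the set of vertices admitting a directed path to `z` in `Q`. -/
def SuppI {n : ℕ} (Q : TypeAQuiver n) (z : Fin n) : Set (Fin n) :=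
  {x | Relation.ReflTransGen Q.arr x z}

/-- The arrow relation of the quiver `Q^F` obtained from `Q` by adding the extra
arrows in `F` (an extra arrow is recorded as the pair (source, target)). -/
def QFarr {n : ℕ} (Q : TypeAQuiver n) (F : Set (Fin n × Fin n)) :
    Fin n → Fin n → Prop :=
  fun x y => Q.arr x y ∨ (x, y) ∈ F

/-- `F` is an alien set for the type `A_n` quiver `Q`. -/
structure IsAlienSet {n : ℕ} (Q : TypeAQuiver n) (F : Set (Fin n × Fin n)) : Prop where
  /-- (a) Source and target of each extra arrow lie in `Supp I(z)` for some sink `z`. -/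
  sameSupp : ∀ p ∈ F, ∃ z : Fin n, IsSinkQ Q z ∧ p.1 ∈ SuppI Q z ∧ p.2 ∈ SuppI Q z
  /-- (b) The target of an extra arrow is not a source of `Q`, unless it is extremal. -/
  targetNotSource : ∀ p ∈ F, IsSourceQ Q p.2 → (p.2.val = 0 ∨ p.2.val = n - 1)
  /-- (c) Each extra arrow is the unique directed path in `Q^F` from its source to
  its target: every such path is the single arrow itself. -/
  uniquePath : ∀ p ∈ F, ∀ l : List (Fin n),
    List.Chain (QFarr Q F) p.1 (l ++ [p.2]) → l = []
  /-- (d) `Q^F` is acyclic. -/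
  acyclic : ∀ x : Fin n, ¬ Relation.TransGen (QFarr Q F) x x

/-- The order relation of the poset `P_{Q^F}` associated to the acyclic quiver
`Q^F`: `x ≤ y` iff there is a (possibly trivial) directed path from `x` to `y`. -/
def leQF {n : ℕ} (Q : TypeAQuiver n) (F : Set (Fin n × Fin n)) :
    Fin n → Fin n → Prop :=
  Relation.ReflTransGen (QFarr Q F)
section Work
variable {n : ℕ} {Q : TypeAQuiver n} {F : Set (Fin n × Fin n)}

lemma one_arrow (x y : Fin n) (h : y.val = x.val + 1) : Q.arr x y ∨ Q.arr y x := by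
  by_cases hxy : Q.arr x y
  · exact Or.inl hxy
  · by_contra hc
    push_neg at hc
    exact hxy ((Q.exactlyOne x y h).mpr hc.2)

lemma not_both (x y : Fin n) (h : y.val = x.val + 1) (hxy : Q.arr x y) : ¬ Q.arr y x :=
  (Q.exactlyOne x y h).mp hxy

/-- `x` has at most one out-neighbor. -/
def UniqOut (Q : TypeAQuiver n) (x : Fin n) : Prop :=
  ∀ c c' : Fin n, Q.arr x c → Q.arr x c' → c = c'

lemma uniqOut_of_in {w x : Fin n} (hw : Q.arr w x) : UniqOut Q x := by
  intro c c' hc hc'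
  rcases Q.adjacent x c hc with h1 | h1 <;> rcases Q.adjacent x c' hc' with h2 | h2
  · exact Fin.ext (by omega)
  · exfalso
    rcases Q.adjacent w x hw with h3 | h3
    · have hwc : w = c' := Fin.ext (by omega)
      exact not_both c' x h2 (hwc ▸ hw) hc'
    · have hwc : w = c := Fin.ext (by omega)
      exact not_both x c h1 hc (hwc ▸ hw)
  · exfalso
    rcases Q.adjacent w x hw with h3 | h3
    · have hwc : w = c := Fin.ext (by omega)
      exact not_both c x h1 (hwc ▸ hw) hc
    · have hwc : w = c' := Fin.ext (by omega)
      exact not_both x c' h2 hc' (hwc ▸ hw)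
  · exact Fin.ext (by omega)

lemma uniqOut_extremal {x : Fin n} (h : x.val = 0 ∨ x.val = n - 1) : UniqOut Q x := by
  intro c c' hc hc'
  have h1 := Q.adjacent x c hc
  have h2 := Q.adjacent x c' hc'
  have := c.isLt; have := c'.isLt; have := x.isLt
  exact Fin.ext (by omega)

lemma bisource_of_not_uniqOut {x : Fin n} (h : ¬ UniqOut Q x) :
    ∃ u v : Fin n, Q.arr x u ∧ Q.arr x v ∧ u.val = x.val + 1 ∧ x.val = v.val + 1 ∧
      IsSourceQ Q x := by
  unfold UniqOut at h
  push_neg at h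
  obtain ⟨c, c', hc, hc', hne⟩ := h
  rcases Q.adjacent x c hc with h1 | h1 <;> rcases Q.adjacent x c' hc' with h2 | h2
  · exact absurd (Fin.ext (by omega)) hne
  · refine ⟨c, c', hc, hc', h1, h2, ?_⟩
    intro w hw
    rcases Q.adjacent w x hw with h3 | h3
    · have hwc : w = c' := Fin.ext (by omega)
      exact not_both c' x h2 (hwc ▸ hw) hc'
    · have hwc : w = c := Fin.ext (by omega)
      exact not_both x c h1 hc (hwc ▸ hw)
  · refine ⟨c', c, hc', hc, h2, h1, ?_⟩
    intro w hw
    rcases Q.adjacent w x hw with h3 | h3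
    · have hwc : w = c := Fin.ext (by omega)
      exact not_both c x h1 (hwc ▸ hw) hc
    · have hwc : w = c' := Fin.ext (by omega)
      exact not_both x c' h2 hc' (hwc ▸ hw)
  · exact absurd (Fin.ext (by omega)) hne

lemma exists_out {x : Fin n} (h : ¬ IsSinkQ Q x) : ∃ c, Q.arr x c := by
  unfold IsSinkQ at h
  push_neg at h
  exact h

end Work
section Work2
variable {n : ℕ} {Q : TypeAQuiver n} {F : Set (Fin n × Fin n)}

open Relation

lemma sink_right : ∀ (k : ℕ) (x y : Fin n), n - y.val ≤ k → Q.arr x y → y.val = x.val + 1 →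
    ∃ z, IsSinkQ Q z ∧ ReflTransGen Q.arr y z := by
  intro k
  induction k with
  | zero => intro x y hk _ _; exact absurd y.isLt (by omega)
  | succ k ih =>
    intro x y hk hxy hyx
    by_cases hs : IsSinkQ Q y
    · exact ⟨y, hs, ReflTransGen.refl⟩
    · obtain ⟨c, hc⟩ := exists_out hs
      rcases Q.adjacent y c hc with h1 | h1
      · obtain ⟨z, hz, hp⟩ := ih y c (by omega) hc h1
        exact ⟨z, hz, ReflTransGen.head hc hp⟩
      · have : c = x := Fin.ext (by omega)
        exact absurd (this ▸ hc) (not_both x y hyx hxy)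

lemma sink_left : ∀ (k : ℕ) (x y : Fin n), y.val ≤ k → Q.arr x y → x.val = y.val + 1 →
    ∃ z, IsSinkQ Q z ∧ ReflTransGen Q.arr y z := by
  intro k
  induction k with
  | zero =>
    intro x y hk hxy hyx
    by_cases hs : IsSinkQ Q y
    · exact ⟨y, hs, ReflTransGen.refl⟩
    · obtain ⟨c, hc⟩ := exists_out hs
      rcases Q.adjacent y c hc with h1 | h1
      · have : c = x := Fin.ext (by omega)
        exact absurd hxy (not_both y x hyx (this ▸ hc))
      · omega
  | succ k ih =>
    intro x y hk hxy hyx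
    by_cases hs : IsSinkQ Q y
    · exact ⟨y, hs, ReflTransGen.refl⟩
    · obtain ⟨c, hc⟩ := exists_out hs
      rcases Q.adjacent y c hc with h1 | h1
      · have : c = x := Fin.ext (by omega)
        exact absurd hxy (not_both y x hyx (this ▸ hc))
      · obtain ⟨z, hz, hp⟩ := ih y c (by omega) hc h1
        exact ⟨z, hz, ReflTransGen.head hc hp⟩

lemma exists_sink (x : Fin n) : ∃ z, IsSinkQ Q z ∧ ReflTransGen Q.arr x z := by
  by_cases hs : IsSinkQ Q x
  · exact ⟨x, hs, ReflTransGen.refl⟩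
  · obtain ⟨c, hc⟩ := exists_out hs
    rcases Q.adjacent x c hc with h1 | h1
    · obtain ⟨z, hz, hp⟩ := sink_right (n - c.val) x c le_rfl hc h1
      exact ⟨z, hz, ReflTransGen.head hc hp⟩
    · obtain ⟨z, hz, hp⟩ := sink_left c.val x c le_rfl hc h1
      exact ⟨z, hz, ReflTransGen.head hc hp⟩

lemma unique_sink {x z : Fin n} (h : ReflTransGen Q.arr x z) (hz : IsSinkQ Q z)
    (hu : UniqOut Q x) : ∀ z', ReflTransGen Q.arr x z' → IsSinkQ Q z' → z' = z := by
  induction h using ReflTransGen.head_induction_on with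
  | refl =>
    intro z' h' hz'
    rcases h'.cases_head with h0 | ⟨c, hc, _⟩
    · exact h0.symm
    · exact absurd hc (hz c)
  | @head a c hac hcz ih =>
    intro z' h' hz'
    rcases h'.cases_head with h0 | ⟨c₂, hc₂, hp₂⟩
    · exact absurd (h0 ▸ hac) (hz' _)
    · have : c₂ = c := hu c₂ c hc₂ hac
      exact ih (uniqOut_of_in hac) z' (this ▸ hp₂) hz'

lemma path_right {y z : Fin n} (h : ReflTransGen Q.arr y z) (hz : IsSinkQ Q z) :
    ∀ x : Fin n, Q.arr x y → y.val = x.val + 1 →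
      x.val < z.val ∧ ∀ t : Fin n, x.val ≤ t.val → t.val < z.val →
        ∃ u : Fin n, u.val = t.val + 1 ∧ Q.arr t u := by
  induction h using ReflTransGen.head_induction_on with
  | refl =>
    intro x hx hxy
    refine ⟨by omega, fun t ht1 ht2 => ?_⟩
    have : t = x := Fin.ext (by omega)
    subst this
    exact ⟨z, by omega, hx⟩
  | @head a c hac hcz ih =>
    intro x hx hxy
    rcases Q.adjacent a c hac with h1 | h1
    · obtain ⟨hlt, hch⟩ := ih a hac h1
      refine ⟨by omega, fun t ht1 ht2 => ?_⟩
      by_cases hta : t.val = x.val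
      · have : t = x := Fin.ext hta
        subst this
        exact ⟨a, by omega, hx⟩
      · exact hch t (by omega) ht2
    · have : c = x := Fin.ext (by omega)
      exact absurd (this ▸ hac) (not_both x a hxy hx)

lemma path_left {y z : Fin n} (h : ReflTransGen Q.arr y z) (hz : IsSinkQ Q z) :
    ∀ x : Fin n, Q.arr x y → x.val = y.val + 1 →
      z.val < x.val ∧ ∀ t : Fin n, z.val < t.val → t.val ≤ x.val →
        ∃ u : Fin n, t.val = u.val + 1 ∧ Q.arr t u := by
  induction h using ReflTransGen.head_induction_on with
  | refl =>
    intro x hx hxy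
    refine ⟨by omega, fun t ht1 ht2 => ?_⟩
    have : t = x := Fin.ext (by omega)
    subst this
    exact ⟨z, by omega, hx⟩
  | @head a c hac hcz ih =>
    intro x hx hxy
    rcases Q.adjacent a c hac with h1 | h1
    · have : c = x := Fin.ext (by omega)
      exact absurd hx (not_both a x hxy (this ▸ hac))
    · obtain ⟨hlt, hch⟩ := ih a hac h1
      refine ⟨by omega, fun t ht1 ht2 => ?_⟩
      by_cases hta : t.val = x.val
      · have : t = x := Fin.ext hta
        subst this
        exact ⟨a, by omega, hx⟩
      · exact hch t ht1 (by omega)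

lemma supp_right {x z : Fin n} (h : ReflTransGen Q.arr x z) (hz : IsSinkQ Q z)
    (hlt : x.val < z.val) :
    ∀ t : Fin n, x.val ≤ t.val → t.val < z.val →
      ∃ u : Fin n, u.val = t.val + 1 ∧ Q.arr t u := by
  rcases h.cases_head with h0 | ⟨c, hc, hp⟩
  · omega
  · rcases Q.adjacent x c hc with h1 | h1
    · exact (path_right hp hz x hc h1).2
    · have := (path_left hp hz x hc h1).1
      omega

lemma supp_left {x z : Fin n} (h : ReflTransGen Q.arr x z) (hz : IsSinkQ Q z)
    (hlt : z.val < x.val) :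
    ∀ t : Fin n, z.val < t.val → t.val ≤ x.val →
      ∃ u : Fin n, t.val = u.val + 1 ∧ Q.arr t u := by
  rcases h.cases_head with h0 | ⟨c, hc, hp⟩
  · omega
  · rcases Q.adjacent x c hc with h1 | h1
    · have := (path_right hp hz x hc h1).1
      omega
    · exact (path_left hp hz x hc h1).2

lemma chain_le {lo hi : ℕ}
    (hch : ∀ t : Fin n, lo ≤ t.val → t.val < hi → ∃ u : Fin n, u.val = t.val + 1 ∧ Q.arr t u) :
    ∀ (k : ℕ) (a b : Fin n), lo ≤ a.val → b.val ≤ hi → a.val ≤ b.val → b.val - a.val ≤ k →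
      ReflTransGen Q.arr a b := by
  intro k
  induction k with
  | zero =>
    intro a b h1 h2 h3 h4
    have : a = b := Fin.ext (by omega)
    exact this ▸ ReflTransGen.refl
  | succ k ih =>
    intro a b h1 h2 h3 h4
    by_cases hab : a.val = b.val
    · exact (Fin.ext hab : a = b) ▸ ReflTransGen.refl
    · obtain ⟨u, hu, hau⟩ := hch a h1 (by omega)
      exact ReflTransGen.head hau (ih u b (by omega) h2 (by omega) (by omega))

lemma chain_ge {lo hi : ℕ}
    (hch : ∀ t : Fin n, lo < t.val → t.val ≤ hi → ∃ u : Fin n, t.val = u.val + 1 ∧ Q.arr t u) :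
    ∀ (k : ℕ) (a b : Fin n), lo ≤ b.val → a.val ≤ hi → b.val ≤ a.val → a.val - b.val ≤ k →
      ReflTransGen Q.arr a b := by
  intro k
  induction k with
  | zero =>
    intro a b h1 h2 h3 h4
    have : a = b := Fin.ext (by omega)
    exact this ▸ ReflTransGen.refl
  | succ k ih =>
    intro a b h1 h2 h3 h4
    by_cases hab : a.val = b.val
    · exact (Fin.ext hab : a = b) ▸ ReflTransGen.refl
    · obtain ⟨u, hu, hau⟩ := hch a (by omega) h2
      exact ReflTransGen.head hau (ih u b h1 (by omega) (by omega) (by omega))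

end Work2
section Work3
variable {n : ℕ} {Q : TypeAQuiver n} {F : Set (Fin n × Fin n)}

open Relation

lemma rtg_mono {x y : Fin n} (h : ReflTransGen Q.arr x y) : leQF Q F x y :=
  by
  induction h with
  | refl => exact ReflTransGen.refl
  | tail _ hbc ih => exact ReflTransGen.tail ih (Or.inl hbc)

lemma leQF_antisymm (hF : IsAlienSet Q F) {x y : Fin n} (h1 : leQF Q F x y)
    (h2 : leQF Q F y x) : x = y := by
  rcases h1.cases_head with h0 | ⟨c, hc, hp⟩
  · exact h0
  · exact absurd (TransGen.head' hc (hp.trans h2)) (hF.acyclic x)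

lemma sink_no_F (hF : IsAlienSet Q F) {z b : Fin n} (hz : IsSinkQ Q z)
    (hzb : (z, b) ∈ F) : False := by
  obtain ⟨z'', hz''s, hz1, hz2⟩ := hF.sameSupp _ hzb
  have hzz : z = z'' := by
    rcases (hz1 : ReflTransGen Q.arr z z'').cases_head with h0 | ⟨c, hc, _⟩
    · exact h0
    · exact absurd hc (hz c)
  subst hzz
  exact hF.acyclic z (TransGen.head' (Or.inr hzb) (rtg_mono hz2))

lemma max_iff_sink (hF : IsAlienSet Q F) (z : Fin n) :
    RIsMax (leQF Q F) z ↔ IsSinkQ Q z := by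
  constructor
  · intro hmax
    by_contra hs
    obtain ⟨c, hc⟩ := exists_out hs
    have h1 : leQF Q F z c := ReflTransGen.single (Or.inl hc)
    exact hF.acyclic z (TransGen.head' (Or.inl hc) (hmax c h1))
  · intro hz x hx
    rcases hx.cases_head with h0 | ⟨c, hc, _⟩
    · exact h0 ▸ ReflTransGen.refl
    · rcases hc with hc | hc
      · exact absurd hc (hz c)
      · exact absurd hc (fun hc => sink_no_F hF hz hc)

lemma uniqOut_of_F_target (hF : IsAlienSet Q F) {a c : Fin n} (hac : (a, c) ∈ F) :
    UniqOut Q c := by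
  by_cases hs : IsSourceQ Q c
  · exact uniqOut_extremal (hF.targetNotSource _ hac hs)
  · unfold IsSourceQ at hs
    push_neg at hs
    obtain ⟨w, hw⟩ := hs
    exact uniqOut_of_in hw

lemma below_sink_supp (hF : IsAlienSet Q F) {x z : Fin n} (h : leQF Q F x z)
    (hz : IsSinkQ Q z) : ReflTransGen Q.arr x z := by
  induction h using ReflTransGen.head_induction_on with
  | refl => exact ReflTransGen.refl
  | @head a c hac hcz ih =>
    rcases hac with hac | hac
    · exact ReflTransGen.head hac ih
    · obtain ⟨z'', hz''s, ha, hc⟩ := hF.sameSupp _ hac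
      have : z = z'' := unique_sink hc hz''s (uniqOut_of_F_target hF hac) z ih hz
      exact this ▸ ha

lemma bisource_of_two (hF : IsAlienSet Q F) {x z z' : Fin n} (h : leQF Q F x z)
    (h' : leQF Q F x z') (hz : IsSinkQ Q z) (hz' : IsSinkQ Q z') (hne : z ≠ z') :
    ∃ u v : Fin n, Q.arr x u ∧ Q.arr x v ∧ u.val = x.val + 1 ∧ x.val = v.val + 1 ∧
      IsSourceQ Q x := by
  have hxz := below_sink_supp hF h hz
  have hxz' := below_sink_supp hF h' hz'
  refine bisource_of_not_uniqOut (fun hu => hne ?_)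
  exact unique_sink hxz' hz' hu z hxz hz

lemma sink_above_bisource (hF : IsAlienSet Q F) {x u v zu zv : Fin n}
    (hu : Q.arr x u) (hv : Q.arr x v) (huv : u.val = x.val + 1) (hvv : x.val = v.val + 1)
    (hzu : IsSinkQ Q zu) (hpu : ReflTransGen Q.arr u zu)
    (hzv : IsSinkQ Q zv) (hpv : ReflTransGen Q.arr v zv) :
    ∀ z, IsSinkQ Q z → leQF Q F x z → z = zu ∨ z = zv := by
  intro z hz h
  have hxz := below_sink_supp hF h hz
  rcases hxz.cases_head with h0 | ⟨c, hc, hp⟩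
  · exact absurd hu (h0 ▸ hz u)
  · rcases Q.adjacent x c hc with h1 | h1
    · have : c = u := Fin.ext (by omega)
      subst this
      exact Or.inl (unique_sink hpu hzu (uniqOut_of_in hu) z hp hz)
    · have : c = v := Fin.ext (by omega)
      subst this
      exact Or.inr (unique_sink hpv hzv (uniqOut_of_in hv) z hp hz)

lemma bisource_min (hF : IsAlienSet Q F) {x u : Fin n}
    (hu : Q.arr x u) (huv : u.val = x.val + 1) (hvv : ∃ v : Fin n, x.val = v.val + 1)
    (hsrc : IsSourceQ Q x) : ∀ w, ¬ QFarr Q F w x := by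
  intro w hw
  obtain ⟨v, hv⟩ := hvv
  rcases hw with hw | hw
  · exact hsrc w hw
  · have h0 : x.val = 0 ∨ x.val = n - 1 := hF.targetNotSource (w, x) hw hsrc
    have := u.isLt
    have := x.isLt
    omega

end Work3
section Work4
variable {n : ℕ} {Q : TypeAQuiver n} {F : Set (Fin n × Fin n)}

open Relation

lemma connectedQF (hn : 1 ≤ n) : RConnected (leQF Q F) := by
  have hadj : ∀ (k : ℕ) (h : k + 1 < n),
      (RCompGraph (leQF Q F)).Adj ⟨k, by omega⟩ ⟨k + 1, h⟩ := by
    intro k h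
    change _ ∧ _
    refine ⟨fun hh => absurd (congrArg Fin.val hh) (by simp), ?_⟩
    rcases one_arrow (Q := Q) ⟨k, by omega⟩ ⟨k + 1, h⟩ rfl with ha | ha
    · exact Or.inl (ReflTransGen.single (Or.inl ha))
    · exact Or.inr (ReflTransGen.single (Or.inl ha))
  have hreach : ∀ (k : ℕ) (h : k < n),
      (RCompGraph (leQF Q F)).Reachable ⟨0, hn⟩ ⟨k, h⟩ := by
    intro k
    induction k with
    | zero => intro h; exact SimpleGraph.Reachable.refl _
    | succ k ih => intro h; exact (ih (by omega)).trans (hadj k h).reachable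
  rw [RConnected, SimpleGraph.connected_iff]
  refine ⟨fun x y => ?_, ⟨⟨0, hn⟩⟩⟩
  exact (hreach x.val x.isLt).symm.trans (hreach y.val y.isLt)

lemma no_R2 (hF : IsAlienSet Q F) : ¬ ContainsR2 (leQF Q F) := by
  rintro ⟨z, z', y, x, hmz, hmz', hne, hyx, hxz, hxz'⟩
  have hz := (max_iff_sink hF z).mp hmz
  have hz' := (max_iff_sink hF z').mp hmz'
  obtain ⟨u, v, hu, hv, huv, hvv, hsrc⟩ := bisource_of_two hF hxz.1 hxz'.1 hz hz' hne
  have hmin := bisource_min hF hu huv ⟨v, hvv⟩ hsrc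
  have hyne : y ≠ x := fun h => hyx.2 (by rw [h]; exact Relation.ReflTransGen.refl)
  rcases hyx.1.cases_tail with h0 | ⟨c, _, hc⟩
  · exact hyne h0.symm
  · exact hmin c hc

lemma no_R3 (hF : IsAlienSet Q F) : ¬ ContainsR3 (leQF Q F) := by
  rintro ⟨z₁, z₂, z₃, x, hm1, hm2, hm3, h12, h13, h23, hx1, hx2, hx3⟩
  have hz1 := (max_iff_sink hF _).mp hm1
  have hz2 := (max_iff_sink hF _).mp hm2
  have hz3 := (max_iff_sink hF _).mp hm3
  obtain ⟨u, v, hu, hv, huv, hvv, hsrc⟩ := bisource_of_two hF hx1.1 hx2.1 hz1 hz2 h12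
  obtain ⟨zu, hzu, hpu⟩ := exists_sink u
  obtain ⟨zv, hzv, hpv⟩ := exists_sink v
  have k := sink_above_bisource hF hu hv huv hvv hzu hpu hzv hpv
  rcases k z₁ hz1 hx1.1 with e1 | e1 <;> rcases k z₂ hz2 hx2.1 with e2 | e2 <;>
    rcases k z₃ hz3 hx3.1 with e3 | e3 <;>
    first
      | exact h12 (e1.trans e2.symm)
      | exact h13 (e1.trans e3.symm)
      | exact h23 (e2.trans e3.symm)

lemma same_side_left {z a b : Fin n} (hz : IsSinkQ Q z)
    (ha : ReflTransGen Q.arr a z) (hb : ReflTransGen Q.arr b z)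
    (hinc : RIncomp (leQF Q F) a b) (ha' : a.val < z.val) (hb' : b.val < z.val) : False := by
  rcases le_total a.val b.val with h | h
  · exact hinc.1 (rtg_mono
      (chain_le (supp_right ha hz ha') (b.val - a.val) a b le_rfl (le_of_lt hb') h le_rfl))
  · exact hinc.2 (rtg_mono
      (chain_le (supp_right hb hz hb') (a.val - b.val) b a le_rfl (le_of_lt ha') h le_rfl))

lemma same_side_right {z a b : Fin n} (hz : IsSinkQ Q z)
    (ha : ReflTransGen Q.arr a z) (hb : ReflTransGen Q.arr b z)
    (hinc : RIncomp (leQF Q F) a b) (ha' : z.val < a.val) (hb' : z.val < b.val) : False := by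
  rcases le_total a.val b.val with h | h
  · exact hinc.2 (rtg_mono
      (chain_ge (supp_left hb hz hb') (b.val - a.val) b a (le_of_lt ha') le_rfl h le_rfl))
  · exact hinc.1 (rtg_mono
      (chain_ge (supp_left ha hz ha') (a.val - b.val) a b (le_of_lt hb') le_rfl h le_rfl))

lemma no_R1 (hF : IsAlienSet Q F) : ¬ ContainsR1 (leQF Q F) := by
  rintro ⟨z, a, b, c, hmax, hab, hac, hbc, iab, iac, ibc, la, lb, lc⟩
  have hz := (max_iff_sink hF z).mp hmax
  have ha := below_sink_supp hF la.1 hz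
  have hb := below_sink_supp hF lb.1 hz
  have hc := below_sink_supp hF lc.1 hz
  have hane : a.val ≠ z.val := fun h => la.2 (by rw [show a = z from Fin.ext h]; exact Relation.ReflTransGen.refl)
  have hbne : b.val ≠ z.val := fun h => lb.2 (by rw [show b = z from Fin.ext h]; exact Relation.ReflTransGen.refl)
  have hcne : c.val ≠ z.val := fun h => lc.2 (by rw [show c = z from Fin.ext h]; exact Relation.ReflTransGen.refl)
  rcases lt_or_gt_of_ne hane with h1 | h1
  · rcases lt_or_gt_of_ne hbne with h2 | h2
    · exact same_side_left hz ha hb iab h1 h2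
    · rcases lt_or_gt_of_ne hcne with h3 | h3
      · exact same_side_left hz ha hc iac h1 h3
      · exact same_side_right hz hb hc ibc h2 h3
  · rcases lt_or_gt_of_ne hbne with h2 | h2
    · rcases lt_or_gt_of_ne hcne with h3 | h3
      · exact same_side_left hz hb hc ibc h2 h3
      · exact same_side_right hz ha hc iac h1 h3
    · exact same_side_right hz ha hb iab h1 h2

lemma no_src_between {s s' Z : Fin n} (hsrc : IsSourceQ Q s') (h1 : s.val < s'.val)
    (h2 : s'.val < Z.val)
    (hch : ∀ t : Fin n, s.val ≤ t.val → t.val < Z.val →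
      ∃ u : Fin n, u.val = t.val + 1 ∧ Q.arr t u) : False := by
  have hn' : s'.val - 1 < n := by have := s'.isLt; omega
  obtain ⟨u, hu, htu⟩ :=
    hch ⟨s'.val - 1, hn'⟩ (by omega : s.val ≤ s'.val - 1) (by omega : s'.val - 1 < Z.val)
  have hu' : u.val = s'.val - 1 + 1 := hu
  have : u = s' := Fin.ext (by omega)
  exact hsrc _ (this ▸ htu)

lemma no_crown (hF : IsAlienSet Q F) : ∀ m : ℕ, ¬ ContainsCrown (leQF Q F) m := by
  intro m
  rintro ⟨z, x, hzinj, hxinj, hmax, hne, hinc, hiff⟩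
  have hone : (1 : Fin (m + 2)) ≠ 0 := by
    intro h
    have := congrArg Fin.val h
    simp at this
  have hsub : ∀ i : Fin (m + 2), i - 1 ≠ i := by
    intro i h
    exact hone (sub_eq_self.mp h)
  have hadd : ∀ i : Fin (m + 2), i + 1 ≠ i := by
    intro i h
    exact hone (add_left_cancel (a := i) (h.trans (add_zero i).symm))
  have hsz : ∀ j, IsSinkQ Q (z j) := fun j => (max_iff_sink hF _).mp (hmax j)
  have main : ∀ i : Fin (m + 2), ∃ zu zv : Fin n,
      (x i).val < zu.val ∧ zv.val < (x i).val ∧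
      (∀ t : Fin n, (x i).val ≤ t.val → t.val < zu.val →
        ∃ u : Fin n, u.val = t.val + 1 ∧ Q.arr t u) ∧
      ((z i = zu ∧ z (i - 1) = zv) ∨ (z i = zv ∧ z (i - 1) = zu)) ∧
      IsSourceQ Q (x i) := by
    intro i
    have hlt1 : RLt (leQF Q F) (x i) (z i) := (hiff i i).mpr (Or.inl rfl)
    have hlt2 : RLt (leQF Q F) (x i) (z (i - 1)) := (hiff i (i - 1)).mpr (Or.inr rfl)
    have hzz : z i ≠ z (i - 1) := fun h => hsub i (hzinj h).symm
    obtain ⟨u, v, hu, hv, huv, hvv, hsrc⟩ :=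
      bisource_of_two hF hlt1.1 hlt2.1 (hsz i) (hsz (i - 1)) hzz
    obtain ⟨zu, hzu, hpu⟩ := exists_sink u
    obtain ⟨zv, hzv, hpv⟩ := exists_sink v
    have pr := path_right hpu hzu (x i) hu huv
    have pl := path_left hpv hzv (x i) hv hvv
    have k := sink_above_bisource hF hu hv huv hvv hzu hpu hzv hpv
    have e1 := k (z i) (hsz i) hlt1.1
    have e2 := k (z (i - 1)) (hsz (i - 1)) hlt2.1
    refine ⟨zu, zv, pr.1, pl.1, pr.2, ?_, hsrc⟩
    rcases e1 with e1 | e1 <;> rcases e2 with e2 | e2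
    · exact absurd (e1.trans e2.symm) hzz
    · exact Or.inl ⟨e1, e2⟩
    · exact Or.inr ⟨e1, e2⟩
    · exact absurd (e1.trans e2.symm) hzz
  obtain ⟨j, hj⟩ := Finite.exists_max (fun k : Fin (m + 2) => (z k).val)
  obtain ⟨zu1, zv1, hlt1, hgt1, hch1, hor1, hsrc1⟩ := main j
  obtain ⟨zu2, zv2, hlt2, hgt2, hch2, hor2, hsrc2⟩ := main (j + 1)
  have e1 : z j = zu1 := by
    rcases hor1 with ⟨h1, h2⟩ | ⟨h1, h2⟩
    · exact h1
    · exfalso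
      have hh := hj (j - 1)
      rw [h1, h2] at hh
      omega
  have hsimp : (j + 1) - 1 = j := add_sub_cancel_right j 1
  have e2 : z j = zu2 := by
    rw [hsimp] at hor2
    rcases hor2 with ⟨h1, h2⟩ | ⟨h1, h2⟩
    · exfalso
      have hh := hj (j + 1)
      rw [h1, h2] at hh
      omega
    · exact h2
  have eZ : zu2 = zu1 := e2 ▸ e1
  have hxne : (x j).val ≠ (x (j + 1)).val := by
    intro h
    exact hadd j (hxinj (Fin.ext h)).symm
  rcases lt_or_gt_of_ne hxne with h | h
  · exact no_src_between hsrc2 h (eZ ▸ hlt2) hch1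
  · exact no_src_between hsrc1 h (hlt1.trans_le (le_of_eq (congrArg Fin.val eZ.symm))) hch2

end Work4

/-- The poset associated to `Q^F`, where `Q` is a quiver of type
`A_n` (`n ≥ 1`) and `F` is an alien set for `Q`, is a poset of type `A`. -/
theorem poset_of_typeA_quiver_with_alien_set_is_typeA {n : ℕ} (hn : 1 ≤ n)
    (Q : TypeAQuiver n) (F : Set (Fin n × Fin n)) (hF : IsAlienSet Q F) :
    IsTypeA (leQF Q F) := by
  exact ⟨connectedQF hn, no_R1 hF, no_R2 hF, no_R3 hF, no_crown hF⟩
end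

section
/- Let P be a poset of type A with n elements. Then there exist a quiver Q of type A_n and an alien set F for Q such that P is order-isomorphic to the poset P_{Q^F} associated to the quiver Q^F. -/
/-! ## Auxiliary development -/

section TAProof

open Relation List

variable {P : Type*} [Fintype P] [PartialOrder P]

/-- Total version of list indexing with a default junk element. -/
noncomputable def TA.gd [Nonempty P] (L : List P) (i : ℕ) : P := L.getD i (Classical.arbitrary P)

/-- `i` and `j` are joined by an arrow of the underlying `A_n` quiver encoded by `o`. -/
def TA.AdjA (o : ℕ → Bool) (i j : ℕ) : Prop := (j = i + 1 ∧ o i = true) ∨ (i = j + 1 ∧ o j = false)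

/-- There is a monotone run of arrows from position `q` to position `p`. -/
def TA.Tow (o : ℕ → Bool) (q p : ℕ) : Prop :=
  (q ≤ p ∧ ∀ r, q ≤ r → r < p → o r = true) ∨ (p ≤ q ∧ ∀ r, p ≤ r → r < q → o r = false)

/-- A good layout of the set `A`: a list of its elements together with an orientation
profile satisfying all conditions needed to produce a type `A_n` quiver plus alien set. -/
structure TA.GoodL [Nonempty P] (A : Set P) (L : List P) (o : ℕ → Bool) : Prop where
  (mem : ∀ x : P, x ∈ L ↔ x ∈ A)
  (nodup : L.Nodup)
  (orient : ∀ i : ℕ, i + 1 < L.length →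
    (o i = true → TA.gd L i < TA.gd L (i+1)) ∧ (o i = false → TA.gd L (i+1) < TA.gd L i))
  (srcmin : ∀ q : ℕ, 0 < q → q + 1 < L.length → o (q-1) = false → o q = true →
    ∀ y : P, y ≤ TA.gd L q → y = TA.gd L q)
  (covers : ∀ i j : ℕ, i < L.length → j < L.length → TA.gd L i ⋖ TA.gd L j → ¬ TA.AdjA o i j →
    ∃ p : ℕ, p < L.length ∧ (p = 0 ∨ o (p-1) = true) ∧ (p + 1 = L.length ∨ o p = false) ∧
      TA.Tow o i p ∧ TA.Tow o j p)

/-- The type `A_n` quiver determined by an orientation profile. -/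
def TA.mkQ (n : ℕ) (o : ℕ → Bool) : TypeAQuiver n where
  arr x y := (y.val = x.val + 1 ∧ o x.val = true) ∨ (x.val = y.val + 1 ∧ o y.val = false)
  adjacent x y h := by rcases h with ⟨h, _⟩ | ⟨h, _⟩ <;> omega
  exactlyOne x y h := by
    have hyx : ¬ x.val = y.val + 1 := by omega
    cases hox : o x.val <;> simp [h, hyx, hox] <;> omega

theorem TA.good_realizes {n : ℕ} (hcard : Fintype.card P = n) [Nonempty P]
    {L : List P} {o : ℕ → Bool} (h : TA.GoodL (Set.univ : Set P) L o) :
    ∃ (Q : TypeAQuiver n) (F : Set (Fin n × Fin n)), IsAlienSet Q F ∧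
      ∃ e : P ≃ Fin n, ∀ x y : P, x ≤ y ↔ leQF Q F (e x) (e y) := by
  classical
  have hmem : ∀ x : P, x ∈ L := fun x => (h.mem x).2 trivial
  have hlen : L.length = n := by
    have huniv : L.toFinset = Finset.univ := by ext x; simp [hmem]
    rw [← hcard, ← Finset.card_univ, ← huniv, List.toFinset_card_of_nodup h.nodup]
  have hn1 : 1 ≤ n := by
    rw [← hcard]; exact Fintype.card_pos
  set eqv : Fin L.length ≃ P := h.nodup.getEquivOfForallMemList L hmem with heqv
  set e : P ≃ Fin n := eqv.symm.trans (finCongr hlen) with he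
  set elt : Fin n → P := fun i => TA.gd L i.val with helt
  have heltget : ∀ (i : ℕ) (hi : i < L.length), TA.gd L i = L.get ⟨i, hi⟩ := by
    intro i hi; simp [TA.gd, List.getD_eq_getElem?_getD, List.getElem?_eq_getElem hi]
  have helte : ∀ x : P, elt (e x) = x := by
    intro x
    have hv : (e x).val = (eqv.symm x).val := rfl
    have hlt : ((eqv.symm x) : Fin L.length).val < L.length := (eqv.symm x).isLt
    rw [helt]; dsimp only
    rw [hv, heltget _ hlt]
    have h2 : L.get ⟨(eqv.symm x).val, hlt⟩ = eqv (eqv.symm x) := rfl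
    rw [h2, Equiv.apply_symm_apply]
  set Q : TypeAQuiver n := TA.mkQ n o with hQdef
  set F : Set (Fin n × Fin n) := {p : Fin n × Fin n | elt p.1 ⋖ elt p.2 ∧ ¬ Q.arr p.1 p.2} with hF
  have harrlt : ∀ a b : Fin n, Q.arr a b → elt a < elt b := by
    intro a b hab
    rcases hab with ⟨hb, ho⟩ | ⟨ha, ho⟩
    · have h1 : a.val + 1 < L.length := by rw [hlen]; omega
      have := (h.orient a.val h1).1 ho
      rw [helt]; dsimp only; rw [hb]; exact this
    · have h1 : b.val + 1 < L.length := by rw [hlen]; omega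
      have := (h.orient b.val h1).2 ho
      rw [helt]; dsimp only; rw [ha]; exact this
  have hQF : ∀ a b : Fin n, QFarr Q F a b → elt a < elt b := by
    intro a b hab
    rcases hab with hab | hab
    · exact harrlt a b hab
    · exact hab.1.lt
  have hcov : ∀ a b : Fin n, elt a ⋖ elt b → QFarr Q F a b := by
    intro a b hab
    by_cases hq : Q.arr a b
    · exact Or.inl hq
    · exact Or.inr ⟨hab, hq⟩
  have up : ∀ (k q : ℕ) (hq : q < n) (hqk : q + k < n),
      (∀ r, q ≤ r → r < q + k → o r = true) →
      ReflTransGen Q.arr ⟨q, hq⟩ ⟨q + k, hqk⟩ := by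
    intro k
    induction k with
    | zero => intro q hq hqk _; exact ReflTransGen.refl
    | succ k ih =>
      intro q hq hqk hall
      refine ReflTransGen.tail (ih q hq (by omega) (fun r h1 h2 => hall r h1 (by omega))) ?_
      exact Or.inl ⟨rfl, hall (q + k) (by omega) (by omega)⟩
  have down : ∀ (k p : ℕ) (hp : p < n) (hpk : p + k < n),
      (∀ r, p ≤ r → r < p + k → o r = false) →
      ReflTransGen Q.arr ⟨p + k, hpk⟩ ⟨p, hp⟩ := by
    intro k
    induction k with
    | zero => intro p hp hpk _; exact ReflTransGen.refl
    | succ k ih =>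
      intro p hp hpk hall
      refine ReflTransGen.head ?_ (ih p hp (by omega) (fun r h1 h2 => hall r h1 (by omega)))
      exact Or.inr ⟨rfl, hall (p + k) (by omega) (by omega)⟩
  have tow_supp : ∀ (q p : ℕ) (hq : q < n) (hp : p < n), TA.Tow o q p →
      ReflTransGen Q.arr ⟨q, hq⟩ ⟨p, hp⟩ := by
    rintro q p hq hp (⟨hle, hall⟩ | ⟨hle, hall⟩)
    · obtain ⟨k, rfl⟩ : ∃ k, p = q + k := ⟨p - q, by omega⟩
      exact up k q hq hp (fun r h1 h2 => hall r h1 h2)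
    · obtain ⟨k, rfl⟩ : ∃ k, q = p + k := ⟨q - p, by omega⟩
      exact down k p hp hq (fun r h1 h2 => hall r h1 h2)
  refine ⟨Q, F, ⟨?_, ?_, ?_, ?_⟩, ⟨e, ?_⟩⟩
  · -- sameSupp
    intro p hp
    have hnadj : ¬ TA.AdjA o p.1.val p.2.val := by
      rintro (⟨h1, h2⟩ | ⟨h1, h2⟩)
      · exact hp.2 (Or.inl ⟨h1, h2⟩)
      · exact hp.2 (Or.inr ⟨h1, h2⟩)
    obtain ⟨pp, hpl, hsl, hsr, t1, t2⟩ :=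
      h.covers p.1.val p.2.val (by rw [hlen]; exact p.1.isLt) (by rw [hlen]; exact p.2.isLt)
        hp.1 hnadj
    have hppn : pp < n := by omega
    refine ⟨⟨pp, hppn⟩, ?_, ?_, ?_⟩
    · intro y hy
      have hppval : ((⟨pp, hppn⟩ : Fin n) : ℕ) = pp := rfl
      rcases hy with ⟨h1, h2⟩ | ⟨h1, h2⟩
      · rw [hppval] at h1 h2
        rcases hsr with hh | hh
        · have := y.isLt; omega
        · rw [hh] at h2; exact Bool.false_ne_true h2
      · rw [hppval] at h1
        rcases hsl with hh | hh
        · omega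
        · have h3 : (y : ℕ) = pp - 1 := by omega
          rw [h3, hh] at h2
          simp at h2
    · have := tow_supp p.1.val pp p.1.isLt hppn t1
      simpa [SuppI] using this
    · have := tow_supp p.2.val pp p.2.isLt hppn t2
      simpa [SuppI] using this
  · -- targetNotSource
    intro p hp hsrc
    by_contra hne
    push_neg at hne
    obtain ⟨hne0, hnen⟩ := hne
    have hj : 0 < p.2.val ∧ p.2.val < n - 1 := by
      have := p.2.isLt; omega
    have h1 : o (p.2.val - 1) = false := by
      cases hb : o (p.2.val - 1)
      · rfl
      · exfalso
        exact hsrc ⟨p.2.val - 1, by omega⟩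
          (Or.inl ⟨show p.2.val = (p.2.val - 1) + 1 by omega, hb⟩)
    have h2 : o p.2.val = true := by
      cases hb : o p.2.val
      · exfalso
        exact hsrc ⟨p.2.val + 1, by omega⟩ (Or.inr ⟨rfl, hb⟩)
      · rfl
    have hmin := h.srcmin p.2.val hj.1 (by rw [hlen]; omega) h1 h2
    have hlt : elt p.1 < elt p.2 := hp.1.lt
    exact absurd (hmin (elt p.1) hlt.le) (ne_of_lt hlt)
  · -- uniquePath
    intro p hp l hchain
    have main : ∀ (m : List (Fin n)) (a b : Fin n), List.Chain (QFarr Q F) a (m ++ [b]) →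
        elt a < elt b := by
      intro m
      induction m with
      | nil =>
        intro a b hc
        rw [List.nil_append, List.Chain, List.isChain_cons_cons] at hc
        exact hQF a b hc.1
      | cons c t ih =>
        intro a b hc
        rw [List.cons_append, List.Chain, List.isChain_cons_cons] at hc
        exact lt_trans (hQF a c hc.1) (ih c b hc.2)
    cases l with
    | nil => rfl
    | cons a t =>
      exfalso
      rw [List.cons_append, List.Chain, List.isChain_cons_cons] at hchain
      exact hp.1.2 (hQF _ _ hchain.1) (main t a p.2 hchain.2)
  · -- acyclic
    intro x hx
    have mono : ∀ a b : Fin n, TransGen (QFarr Q F) a b → elt a < elt b := by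
      intro a b hab
      induction hab with
      | single h1 => exact hQF _ _ h1
      | tail _ h2 ih => exact lt_trans ih (hQF _ _ h2)
    exact lt_irrefl _ (mono x x hx)
  · -- the order isomorphism
    intro x y
    constructor
    · intro hxy
      letI : DecidableRel ((· < ·) : P → P → Prop) := Classical.decRel _
      letI : DecidableRel ((· ≤ ·) : P → P → Prop) := Classical.decRel _
      letI : LocallyFiniteOrder P := Fintype.toLocallyFiniteOrder
      have hc : ReflTransGen (· ⋖ ·) x y := le_iff_reflTransGen_covBy.mp hxy
      have := ReflTransGen.lift e (fun a b hab => hcov (e a) (e b)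
        (by rw [helte, helte]; exact hab)) x y hc
      exact this
    · intro hxy
      have mono : ∀ a b : Fin n, ReflTransGen (QFarr Q F) a b → elt a ≤ elt b := by
        intro a b hab
        induction hab with
        | refl => exact le_refl _
        | tail _ h2 ih => exact le_trans ih (hQF _ _ h2).le
      have := mono _ _ hxy
      rwa [helte, helte] at this

/-! ### Structural lemmas for type `A` posets -/

/-- Maximality in the partial order. -/
def TA.Mx (z : P) : Prop := ∀ x : P, z ≤ x → x ≤ z

/-- Minimality in the partial order. -/
def TA.Mn (w : P) : Prop := ∀ y : P, y ≤ w → y = w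

lemma TA.rlt_iff {x y : P} : RLt (fun a b : P => a ≤ b) x y ↔ x < y := lt_iff_le_not_ge.symm

lemma TA.exists_mx (x : P) : ∃ z : P, TA.Mx z ∧ x ≤ z := by
  obtain ⟨b, hxb, hb⟩ := Finite.exists_le_maximal (p := fun _ : P => True) trivial
  exact ⟨b, fun y hy => hb.2 trivial hy, hxb⟩

lemma TA.nonmax_lt {x z : P} (hz : TA.Mx z) (hx : ¬ TA.Mx x) (h : x ≤ z) : x < z :=
  lt_of_le_of_ne h (fun he => hx (he ▸ hz))

lemma TA.not_mx_of_two {x z z' : P} (hz : TA.Mx z) (hz' : TA.Mx z') (hne : z ≠ z')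
    (h1 : x ≤ z) (h2 : x ≤ z') : ¬ TA.Mx x := by
  intro hx
  have e1 : x = z := le_antisymm h1 (hx z h1)
  have e2 : x = z' := le_antisymm h2 (hx z' h2)
  exact hne (e1 ▸ e2)

lemma TA.not_three (hR3 : ¬ ContainsR3 (fun x y : P => x ≤ y)) {z₁ z₂ z₃ x : P}
    (h1 : TA.Mx z₁) (h2 : TA.Mx z₂) (h3 : TA.Mx z₃)
    (h12 : z₁ ≠ z₂) (h13 : z₁ ≠ z₃) (h23 : z₂ ≠ z₃)
    (hx1 : x ≤ z₁) (hx2 : x ≤ z₂) (hx3 : x ≤ z₃) : False := by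
  have hnm : ¬ TA.Mx x := TA.not_mx_of_two h1 h2 h12 hx1 hx2
  exact hR3 ⟨z₁, z₂, z₃, x, h1, h2, h3, h12, h13, h23,
    TA.rlt_iff.mpr (TA.nonmax_lt h1 hnm hx1),
    TA.rlt_iff.mpr (TA.nonmax_lt h2 hnm hx2),
    TA.rlt_iff.mpr (TA.nonmax_lt h3 hnm hx3)⟩

lemma TA.min_of_two (hR2 : ¬ ContainsR2 (fun x y : P => x ≤ y)) {x z z' : P}
    (hz : TA.Mx z) (hz' : TA.Mx z') (hne : z ≠ z') (h1 : x ≤ z) (h2 : x ≤ z') : TA.Mn x := by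
  intro y hy
  by_contra hyx
  have hnm : ¬ TA.Mx x := TA.not_mx_of_two hz hz' hne h1 h2
  refine hR2 ⟨z, z', y, x, hz, hz', hne, ⟨hy, ?_⟩,
    TA.rlt_iff.mpr (TA.nonmax_lt hz hnm h1), TA.rlt_iff.mpr (TA.nonmax_lt hz' hnm h2)⟩
  intro hxy
  exact hyx (le_antisymm hy hxy)

lemma TA.mn_incomp {x y : P} (hx : TA.Mn x) (hy : TA.Mn y) (hne : x ≠ y) :
    ¬ x ≤ y ∧ ¬ y ≤ x :=
  ⟨fun h => hne (hy x h), fun h => hne ((hx y h).symm)⟩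

lemma TA.unique_bound (hR2 : ¬ ContainsR2 (fun x y : P => x ≤ y))
    (hcr : ∀ k, ¬ ContainsCrown (fun x y : P => x ≤ y) k) {z z' x x' : P}
    (hz : TA.Mx z) (hz' : TA.Mx z') (hne : z ≠ z')
    (hx1 : x ≤ z) (hx2 : x ≤ z') (hx1' : x' ≤ z) (hx2' : x' ≤ z') : x = x' := by
  by_contra hxx
  have m1 : TA.Mn x := TA.min_of_two hR2 hz hz' hne hx1 hx2
  have m2 : TA.Mn x' := TA.min_of_two hR2 hz hz' hne hx1' hx2'
  have hnm : ¬ TA.Mx x := TA.not_mx_of_two hz hz' hne hx1 hx2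
  have hnm' : ¬ TA.Mx x' := TA.not_mx_of_two hz hz' hne hx1' hx2'
  have hinc := TA.mn_incomp m1 m2 hxx
  apply hcr 0
  refine ⟨![z, z'], ![x, x'], ?_, ?_, ?_, ?_, ?_, ?_⟩
  · intro i j hij
    fin_cases i <;> fin_cases j <;> simp_all
  · intro i j hij
    fin_cases i <;> fin_cases j <;> simp_all
  · intro j; fin_cases j <;> [exact hz; exact hz']
  · intro i j
    fin_cases i <;> fin_cases j <;> simp <;> intro hh
    · exact hnm (hh ▸ hz)
    · exact hnm (hh ▸ hz')
    · exact hnm' (hh ▸ hz)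
    · exact hnm' (hh ▸ hz')
  · intro i j hij
    fin_cases i <;> fin_cases j <;> simp_all
    · exact ⟨hinc.1, hinc.2⟩
    · exact ⟨hinc.2, hinc.1⟩
  · intro i j
    constructor
    · intro _
      fin_cases i <;> fin_cases j <;> decide
    · intro _
      fin_cases i <;> fin_cases j <;>
        simp only [Matrix.cons_val_zero, Matrix.cons_val_one, Matrix.head_cons] <;>
        [exact TA.rlt_iff.mpr (TA.nonmax_lt hz hnm hx1);
         exact TA.rlt_iff.mpr (TA.nonmax_lt hz' hnm hx2);
         exact TA.rlt_iff.mpr (TA.nonmax_lt hz hnm' hx1');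
         exact TA.rlt_iff.mpr (TA.nonmax_lt hz' hnm' hx2')]

lemma TA.no_three_below (hR1 : ¬ ContainsR1 (fun x y : P => x ≤ y)) {z a b c : P}
    (hz : TA.Mx z) (hab : a ≠ b) (hac : a ≠ c) (hbc : b ≠ c)
    (iab : ¬ a ≤ b ∧ ¬ b ≤ a) (iac : ¬ a ≤ c ∧ ¬ c ≤ a) (ibc : ¬ b ≤ c ∧ ¬ c ≤ b)
    (ha : a < z) (hb : b < z) (hc : c < z) : False :=
  hR1 ⟨z, a, b, c, hz, hab, hac, hbc, iab, iac, ibc,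
    TA.rlt_iff.mpr ha, TA.rlt_iff.mpr hb, TA.rlt_iff.mpr hc⟩

/-- The neighbour relation on maximal elements inside `A`. -/
def TA.NbrR (A : Set P) (z z' : P) : Prop :=
  z ≠ z' ∧ TA.Mx z ∧ TA.Mx z' ∧ z ∈ A ∧ z' ∈ A ∧ ∃ x, x ≤ z ∧ x ≤ z'

lemma TA.deg_le_two (hR1 : ¬ ContainsR1 (fun x y : P => x ≤ y))
    (hR2 : ¬ ContainsR2 (fun x y : P => x ≤ y))
    (hR3 : ¬ ContainsR3 (fun x y : P => x ≤ y))
    {A : Set P} {z a b c : P}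
    (ha : TA.NbrR A z a) (hb : TA.NbrR A z b) (hc : TA.NbrR A z c)
    (hab : a ≠ b) (hac : a ≠ c) (hbc : b ≠ c) : False := by
  obtain ⟨hza, hmz, hma, _, _, wa, hwa1, hwa2⟩ := ha
  obtain ⟨hzb, _, hmb, _, _, wb, hwb1, hwb2⟩ := hb
  obtain ⟨hzc, _, hmc, _, _, wc, hwc1, hwc2⟩ := hc
  have hwab : wa ≠ wb := by
    rintro rfl; exact TA.not_three hR3 hma hmb hmz hab (Ne.symm hza) (Ne.symm hzb) hwa2 hwb2 hwa1
  have hwac : wa ≠ wc := by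
    rintro rfl; exact TA.not_three hR3 hma hmc hmz hac (Ne.symm hza) (Ne.symm hzc) hwa2 hwc2 hwa1
  have hwbc : wb ≠ wc := by
    rintro rfl; exact TA.not_three hR3 hmb hmc hmz hbc (Ne.symm hzb) (Ne.symm hzc) hwb2 hwc2 hwb1
  have ma : TA.Mn wa := TA.min_of_two hR2 hmz hma hza hwa1 hwa2
  have mb : TA.Mn wb := TA.min_of_two hR2 hmz hmb hzb hwb1 hwb2
  have mc : TA.Mn wc := TA.min_of_two hR2 hmz hmc hzc hwc1 hwc2
  exact TA.no_three_below hR1 hmz hwab hwac hwbc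
    (TA.mn_incomp ma mb hwab) (TA.mn_incomp ma mc hwac) (TA.mn_incomp mb mc hwbc)
    (TA.nonmax_lt hmz (TA.not_mx_of_two hmz hma hza hwa1 hwa2) hwa1)
    (TA.nonmax_lt hmz (TA.not_mx_of_two hmz hmb hzb hwb1 hwb2) hwb1)
    (TA.nonmax_lt hmz (TA.not_mx_of_two hmz hmc hzc hwc1 hwc2) hwc1)

/-- No cycles: an injective cyclic sequence of maximal elements in which consecutive
ones share a lower bound yields a crown, which is forbidden. -/
lemma TA.no_cycle (hR2 : ¬ ContainsR2 (fun x y : P => x ≤ y))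
    (hR3 : ¬ ContainsR3 (fun x y : P => x ≤ y))
    (hcr : ∀ k, ¬ ContainsCrown (fun x y : P => x ≤ y) k)
    {n' : ℕ} (c : Fin (n' + 3) → P)
    (hinj : Function.Injective c) (hmax : ∀ i, TA.Mx (c i))
    (hnbr : ∀ i, ∃ x, x ≤ c i ∧ x ≤ c (i + 1)) : False := by
  choose X hX1 hX2 using hnbr
  have hone : (1 : Fin (n' + 3)) ≠ 0 := by
    intro hh
    have := congrArg Fin.val hh
    simp [Fin.val_one] at this
  have htwo : (1 + 1 : Fin (n' + 3)) ≠ 0 := by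
    intro hh
    have h1 := congrArg Fin.val hh
    rw [Fin.val_add, Fin.val_one, Fin.val_zero] at h1
    rw [Nat.mod_eq_of_lt (by omega)] at h1
    omega
  have hsub1 : ∀ i : Fin (n' + 3), i - 1 ≠ i := by
    intro i hh
    exact hone (sub_eq_self.mp hh)
  have hsubadd : ∀ i : Fin (n' + 3), i - 1 + 1 = i := fun i => sub_add_cancel i 1
  set x : Fin (n' + 3) → P := fun i => X (i - 1) with hx
  have hxa : ∀ i, x i ≤ c (i - 1) := fun i => hX1 (i - 1)
  have hxb : ∀ i, x i ≤ c i := fun i => by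
    have := hX2 (i - 1); rwa [hsubadd i] at this
  have hnm : ∀ i, ¬ TA.Mx (x i) := fun i =>
    TA.not_mx_of_two (hmax (i - 1)) (hmax i) (fun hh => hsub1 i (hinj hh)) (hxa i) (hxb i)
  have hxmn : ∀ i, TA.Mn (x i) := fun i =>
    TA.min_of_two hR2 (hmax (i - 1)) (hmax i) (fun hh => hsub1 i (hinj hh)) (hxa i) (hxb i)
  have hforward : ∀ i j : Fin (n' + 3), x i ≤ c j → j = i ∨ j = i - 1 := by
    intro i j hle
    by_contra hcon
    push_neg at hcon
    exact TA.not_three hR3 (hmax (i - 1)) (hmax i) (hmax j)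
      (fun hh => hsub1 i (hinj hh)) (fun hh => hcon.2 (hinj hh).symm)
      (fun hh => hcon.1 (hinj hh).symm) (hxa i) (hxb i) hle
  have hxinj : Function.Injective x := by
    intro i j hij
    by_contra hne
    have h1 : j = i ∨ j = i - 1 := hforward i j (hij ▸ hxb j)
    have h2 : i = j ∨ i = j - 1 := hforward j i (by rw [← hij]; exact hxb i)
    rcases h1 with rfl | rfl
    · exact hne rfl
    · rcases h2 with hh | hh
      · exact hne hh
      · -- hh : i = (i - 1) - 1, so 1 + 1 = 0
        apply htwo
        have : i - (1 + 1) = i := by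
          conv_rhs => rw [hh]
          rw [sub_sub]
        exact sub_eq_self.mp this
  apply hcr (n' + 1)
  refine ⟨c, x, hinj, hxinj, fun j => hmax j, ?_, ?_, ?_⟩
  · intro i j hh
    exact hnm i (hh ▸ hmax j)
  · intro i j hij
    exact TA.mn_incomp (hxmn i) (hxmn j) (fun hh => hij (hxinj hh))
  · intro i j
    constructor
    · intro hlt
      exact hforward i j (TA.rlt_iff.mp hlt).le
    · rintro (rfl | rfl)
      · exact TA.rlt_iff.mpr (TA.nonmax_lt (hmax j) (hnm j) (hxb j))
      · exact TA.rlt_iff.mpr (TA.nonmax_lt (hmax (i - 1)) (hnm i) (hxa i))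

lemma TA.exists_max_length {α : Type*} (S : Set (List α)) (hne : S.Nonempty) (N : ℕ)
    (hbd : ∀ l ∈ S, l.length ≤ N) : ∃ l ∈ S, ∀ l' ∈ S, l'.length ≤ l.length := by
  by_contra hcon
  push_neg at hcon
  have grow : ∀ k : ℕ, ∃ l ∈ S, k ≤ l.length := by
    intro k
    induction k with
    | zero => obtain ⟨l, hl⟩ := hne; exact ⟨l, hl, Nat.zero_le _⟩
    | succ k ih =>
      obtain ⟨l, hl, hk⟩ := ih
      obtain ⟨l', hl', hlt⟩ := hcon l hl
      exact ⟨l', hl', by omega⟩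
  obtain ⟨l, hl, hk⟩ := grow (N + 1)
  have := hbd l hl
  omega

lemma TA.nbr_conn_univ (hconn : RConnected (fun x y : P => x ≤ y)) :
    ∀ z z' : P, TA.Mx z → TA.Mx z' →
      Relation.ReflTransGen (TA.NbrR (Set.univ : Set P)) z z' := by
  have step : ∀ (u za zc : P), TA.Mx za → TA.Mx zc → u ≤ za → u ≤ zc →
      Relation.ReflTransGen (TA.NbrR (Set.univ : Set P)) za zc := by
    intro u za zc h1 h2 l1 l2
    by_cases h : za = zc
    · exact h ▸ Relation.ReflTransGen.refl
    · exact Relation.ReflTransGen.single ⟨h, h1, h2, trivial, trivial, u, l1, l2⟩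
  have walkclaim : ∀ (a b : P) (_ : (RCompGraph (fun x y : P => x ≤ y)).Walk a b)
      (za zb : P), TA.Mx za → TA.Mx zb → a ≤ za → b ≤ zb →
      Relation.ReflTransGen (TA.NbrR (Set.univ : Set P)) za zb := by
    intro a b w
    induction w with
    | nil => intro za zb h1 h2 l1 l2; exact step _ za zb h1 h2 l1 l2
    | @cons a' c' b' hadj ww ih =>
      intro za zb h1 h2 l1 l2
      obtain ⟨zc, hzc, hczc⟩ := TA.exists_mx c'
      rcases (show a' ≠ c' ∧ (a' ≤ c' ∨ c' ≤ a') from hadj).2 with hac | hca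
      · exact (step a' za zc h1 hzc l1 (le_trans hac hczc)).trans (ih zc zb hzc h2 hczc l2)
      · exact (step c' za zc h1 hzc (le_trans hca l1) hczc).trans (ih zc zb hzc h2 hczc l2)
  intro z z' hz hz'
  obtain ⟨w⟩ := hconn.preconnected z z'
  exact walkclaim z z' w z z' hz hz' le_rfl le_rfl

lemma TA.exists_endpoint (hR2 : ¬ ContainsR2 (fun x y : P => x ≤ y))
    (hR3 : ¬ ContainsR3 (fun x y : P => x ≤ y))
    (hcr : ∀ k, ¬ ContainsCrown (fun x y : P => x ≤ y) k)
    {A : Set P}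
    (hconnA : ∀ z z', TA.Mx z → z ∈ A → TA.Mx z' → z' ∈ A →
      Relation.ReflTransGen (TA.NbrR A) z z')
    {z₀ : P} (hz₀ : TA.Mx z₀) (hz₀A : z₀ ∈ A) :
    ∃ zl : P, TA.Mx zl ∧ zl ∈ A ∧ ∀ a b, TA.NbrR A zl a → TA.NbrR A zl b → a = b := by
  classical
  by_cases hsing : ∀ z : P, TA.Mx z → z ∈ A → z = z₀
  · refine ⟨z₀, hz₀, hz₀A, fun a b ha hb => ?_⟩
    exact absurd (hsing a ha.2.2.1 ha.2.2.2.2.1) (Ne.symm ha.1)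
  · push_neg at hsing
    obtain ⟨z1, hmz1, hz1A, hz1ne⟩ := hsing
    set S : Set (List P) :=
      {l | l.Nodup ∧ l ≠ [] ∧ l.head? = some z₀ ∧ List.Chain' (TA.NbrR A) l} with hS
    have hSne : [z₀] ∈ S := ⟨List.nodup_singleton z₀, by simp, by simp, List.isChain_singleton _⟩
    have hbd : ∀ l ∈ S, l.length ≤ Fintype.card P := fun l hl => hl.1.length_le_card
    obtain ⟨M, hMS, hMmax⟩ := TA.exists_max_length S ⟨_, hSne⟩ _ hbd
    obtain ⟨hMnd, hMne, hMhead, hMchain⟩ := hMS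
    have hlen0 : 0 < M.length := List.length_pos_iff.mpr hMne
    have hget0 : M.get ⟨0, hlen0⟩ = z₀ := by
      cases M with
      | nil => simp at hMne
      | cons hd tl => simpa using hMhead
    have hchainget := List.isChain_iff_getElem.mp hMchain
    have hgetcongr : ∀ (a b : ℕ) (ha : a < M.length) (hb : b < M.length), a = b →
        M.get ⟨a, ha⟩ = M.get ⟨b, hb⟩ := by
      intro a b ha hb hab
      subst hab
      rfl
    have hMprop : ∀ (i : ℕ) (h : i < M.length), TA.Mx (M.get ⟨i, h⟩) ∧ M.get ⟨i, h⟩ ∈ A := by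
      intro i h
      cases i with
      | zero => exact ⟨hget0 ▸ hz₀, hget0 ▸ hz₀A⟩
      | succ i =>
        have hh := hchainget i (by omega)
        exact ⟨hh.2.2.1, hh.2.2.2.2.1⟩
    have hlen2 : 2 ≤ M.length := by
      by_contra hcc
      have hM1 : M.length = 1 := by omega
      have hreach := hconnA z₀ z1 hz₀ hz₀A hmz1 hz1A
      rcases hreach.cases_head with heq | ⟨c, hc1, _⟩
      · exact hz1ne heq.symm
      · have hmem : [z₀, c] ∈ S := by
          refine ⟨?_, by simp, by simp, ?_⟩
          · have hzc : z₀ ≠ c := hc1.1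
            simp [hzc]
          · simp only [List.Chain', List.isChain_cons_cons, List.isChain_singleton, and_true]
            exact hc1
        have := hMmax _ hmem
        simp [hM1] at this
    have hlastlt : M.length - 1 < M.length := by omega
    have hprevlt : M.length - 2 < M.length := by omega
    set last := M.get ⟨M.length - 1, hlastlt⟩ with hlast
    set prev := M.get ⟨M.length - 2, hprevlt⟩ with hprev
    refine ⟨last, (hMprop _ _).1, (hMprop _ _).2, fun a b ha hb => ?_⟩
    by_contra hab
    have hu : ∃ u, TA.NbrR A last u ∧ u ≠ prev := by
      by_cases hap : a = prev
      · refine ⟨b, hb, fun hh => hab ?_⟩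
        rw [hap, hh]
      · exact ⟨a, ha, hap⟩
    obtain ⟨u, hlu, hup⟩ := hu
    have hlastne : last ≠ u := hlu.1
    have huM : u ∈ M := by
      by_contra huM
      have hgl : M.getLast hMne = last := by
        rw [List.getLast_eq_getElem]; rfl
      have hext : M ++ [u] ∈ S := by
        refine ⟨?_, by simp, ?_, ?_⟩
        · rw [List.nodup_append]
          exact ⟨hMnd, List.nodup_singleton u, by
            intro x hx
            simp only [List.mem_singleton]
            rintro _ rfl hh
            exact huM (hh ▸ hx)⟩
        · cases M with
          | nil => simp at hMne
          | cons hd tl => simpa using hMhead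
        · rw [List.Chain', List.isChain_append]
          refine ⟨hMchain, List.isChain_singleton _, ?_⟩
          intro x hx y hy
          rw [List.getLast?_eq_getLast hMne] at hx
          simp only [Option.mem_some_iff] at hx
          simp only [List.head?_cons, Option.mem_some_iff] at hy
          rw [← hx, ← hy] at *
          rw [hgl]
          exact hlu
      have := hMmax _ hext
      simp at this
    obtain ⟨⟨k, hk⟩, hku⟩ := List.mem_iff_get.mp huM
    have hkne1 : k ≠ M.length - 1 := by
      intro hh
      apply hlastne
      rw [hlast, ← hku]
      exact hgetcongr _ _ _ _ hh.symm
    have hkne2 : k ≠ M.length - 2 := by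
      intro hh
      apply hup
      rw [hprev, ← hku]
      exact hgetcongr _ _ _ _ hh
    have hk3 : k + 3 ≤ M.length := by omega
    obtain ⟨n', hn'⟩ : ∃ n', M.length - k = n' + 3 := ⟨M.length - k - 3, by omega⟩
    set c : Fin (n' + 3) → P := fun i => M.get ⟨k + i.val, by omega⟩ with hcdef
    apply TA.no_cycle hR2 hR3 hcr c
    · intro i j hij
      have h2 := hMnd.get_inj_iff.mp hij
      have h3 : k + i.val = k + j.val := congrArg Fin.val h2
      exact Fin.ext (by omega)
    · intro i; exact (hMprop _ _).1
    · intro i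
      by_cases hi : i.val < n' + 2
      · have hval : (i + 1).val = i.val + 1 := by
          rw [Fin.val_add_one_of_lt]
          rw [Fin.lt_iff_val_lt_val, Fin.val_last]
          exact hi
        have hnn := hchainget (k + i.val) (by omega)
        obtain ⟨x, hx1, hx2⟩ := hnn.2.2.2.2.2
        refine ⟨x, hx1, ?_⟩
        have hidx : c (i + 1) = M.get ⟨k + i.val + 1, by omega⟩ :=
          hgetcongr _ _ _ _ (by omega)
        rw [hidx]
        exact hx2
      · have hival : i.val = n' + 2 := by omega
        have hi1 : (i + 1) = 0 := by
          have hilast : i = Fin.last (n' + 2) := Fin.ext (by simp [hival])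
          rw [hilast, Fin.last_add_one]
        obtain ⟨x, hx1, hx2⟩ := hlu.2.2.2.2.2
        have hci : c i = last := by
          rw [hlast]
          exact hgetcongr _ _ _ _ (by omega)
        have hc0 : c (i + 1) = u := by
          rw [hi1, ← hku]
          exact hgetcongr _ _ _ _ (by simp)
        rw [hci, hc0]
        exact ⟨x, hx1, hx2⟩

/-- Dilworth's theorem for width two (Galvin's argument). -/
lemma TA.dilworth2 [DecidableEq P] : ∀ (S : Finset P),
    (∀ a ∈ S, ∀ b ∈ S, ∀ c ∈ S, a ≠ b → a ≠ c → b ≠ c →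
      ¬ a ≤ b → ¬ b ≤ a → ¬ a ≤ c → ¬ c ≤ a → ¬ b ≤ c → ¬ c ≤ b → False) →
    ∃ C1 C2 : Finset P, IsChain (· ≤ ·) (C1 : Set P) ∧ IsChain (· ≤ ·) (C2 : Set P) ∧
      C1 ∪ C2 = S ∧ Disjoint C1 C2 := by
  classical
  intro S
  induction S using Finset.strongInduction with
  | _ S ih =>
  intro h3
  rcases S.eq_empty_or_nonempty with rfl | hne
  · exact ⟨∅, ∅, by rw [Finset.coe_empty]; exact Set.pairwise_empty _,
      by rw [Finset.coe_empty]; exact Set.pairwise_empty _, by simp,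
      Finset.disjoint_empty_left _⟩
  · obtain ⟨x₀, hx₀⟩ := hne
    obtain ⟨a, _, hamax⟩ := S.exists_le_maximal hx₀
    have haS : a ∈ S := hamax.1
    set S' := S.erase a with hS'
    have hnaS' : a ∉ S' := Finset.notMem_erase a S
    have hssub : S' ⊂ S := Finset.erase_ssubset haS
    have hS'S : S' ⊆ S := Finset.erase_subset a S
    obtain ⟨C1, C2, hc1, hc2, hun, _⟩ := ih S' hssub
      (fun b hb c hc d hd => h3 b (hS'S hb) c (hS'S hc) d (hS'S hd))
    have hC1S' : C1 ⊆ S' := hun ▸ Finset.subset_union_left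
    have hC2S' : C2 ⊆ S' := hun ▸ Finset.subset_union_right
    by_cases hchain : ∀ u ∈ S', ∀ v ∈ S', u ≠ v → u ≤ v ∨ v ≤ u
    · refine ⟨S', {a}, ?_, ?_, ?_, ?_⟩
      · intro u hu v hv huv
        exact hchain u hu v hv huv
      · rw [Finset.coe_singleton]; exact Set.pairwise_singleton _ _
      · rw [Finset.union_comm, ← Finset.insert_eq, hS', Finset.insert_erase haS]
      · exact Finset.disjoint_singleton_right.mpr hnaS'
    · push_neg at hchain
      obtain ⟨u0, hu0, v0, hv0, hne0, hnc1, hnc2⟩ := hchain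
      have key : ∀ (D1 D2 : Finset P) (a1 : P),
          IsChain (· ≤ ·) (D1 : Set P) → IsChain (· ≤ ·) (D2 : Set P) → D1 ∪ D2 = S' →
          a1 ∈ D1 →
          (∀ x ∈ D1, (∃ y ∈ S', x ≠ y ∧ ¬ x ≤ y ∧ ¬ y ≤ x) → x ≤ a1) →
          a1 ≤ a →
          ∃ C1 C2 : Finset P, IsChain (· ≤ ·) (C1 : Set P) ∧ IsChain (· ≤ ·) (C2 : Set P) ∧
            C1 ∪ C2 = S ∧ Disjoint C1 C2 := by
        intro D1 D2 a1 hd1 hd2 hdu _ hgr ha1a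
        have hD1S' : D1 ⊆ S' := hdu ▸ Finset.subset_union_left
        set K := insert a (D1.filter (· ≤ a1)) with hK
        have hKsub : K ⊆ S := by
          intro x hx
          rcases Finset.mem_insert.mp hx with rfl | hx
          · exact haS
          · exact hS'S (hD1S' (Finset.mem_filter.mp hx).1)
        have chainK : IsChain (· ≤ ·) (K : Set P) := by
          intro x hx y hy hxy
          rw [hK, Finset.coe_insert, Set.mem_insert_iff] at hx hy
          rcases hx with rfl | hx
          · rcases hy with rfl | hy
            · exact absurd rfl hxy
            · right
              exact le_trans (Finset.mem_filter.mp hy).2 ha1a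
          · rcases hy with rfl | hy
            · left
              exact le_trans (Finset.mem_filter.mp hx).2 ha1a
            · exact hd1 (Finset.mem_coe.mpr (Finset.mem_filter.mp hx).1)
                (Finset.mem_coe.mpr (Finset.mem_filter.mp hy).1) hxy
        have chainRest : IsChain (· ≤ ·) ((S \ K : Finset P) : Set P) := by
          intro u hu v hv huv
          by_contra hcon
          push_neg at hcon
          obtain ⟨hcon1, hcon2⟩ := hcon
          rw [Finset.coe_sdiff, Set.mem_diff] at hu hv
          obtain ⟨huS, huK⟩ := hu
          obtain ⟨hvS, hvK⟩ := hv
          have hua : u ≠ a := fun hh => huK (by rw [hh, hK]; exact Finset.mem_insert_self a _)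
          have hva : v ≠ a := fun hh => hvK (by rw [hh, hK]; exact Finset.mem_insert_self a _)
          have huS' : u ∈ S' := Finset.mem_erase.mpr ⟨hua, huS⟩
          have hvS' : v ∈ S' := Finset.mem_erase.mpr ⟨hva, hvS⟩
          have hor : u ∈ D1 ∨ v ∈ D1 := by
            by_contra hno
            push_neg at hno
            have hu2 : u ∈ D2 := by
              rcases Finset.mem_union.mp (hdu ▸ huS') with h | h
              · exact absurd h hno.1
              · exact h
            have hv2 : v ∈ D2 := by
              rcases Finset.mem_union.mp (hdu ▸ hvS') with h | h
              · exact absurd h hno.2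
              · exact h
            rcases hd2 (Finset.mem_coe.mpr hu2) (Finset.mem_coe.mpr hv2) huv with h | h
            · exact hcon1 h
            · exact hcon2 h
          rcases hor with hu1 | hv1
          · have hle := hgr u hu1 ⟨v, hvS', huv, hcon1, hcon2⟩
            have hmm : u ∈ K := by
              rw [hK]
              exact Finset.mem_insert.mpr (Or.inr (Finset.mem_filter.mpr ⟨hu1, hle⟩))
            exact huK hmm
          · have hle := hgr v hv1 ⟨u, huS', Ne.symm huv, hcon2, hcon1⟩
            have hmm : v ∈ K := by
              rw [hK]
              exact Finset.mem_insert.mpr (Or.inr (Finset.mem_filter.mpr ⟨hv1, hle⟩))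
            exact hvK hmm
        exact ⟨K, S \ K, chainK, chainRest, Finset.union_sdiff_of_subset hKsub,
          Finset.disjoint_sdiff⟩
      -- witnesses in each chain
      have hwit : ∀ u v : P, u ∈ S' → v ∈ S' → u ≠ v → ¬ u ≤ v → ¬ v ≤ u →
          ∃ x ∈ C1, ∃ y ∈ S', x ≠ y ∧ ¬ x ≤ y ∧ ¬ y ≤ x := by
        intro u v hu hv huv h1 h2
        rcases Finset.mem_union.mp (hun ▸ hu) with hc | hc
        · exact ⟨u, hc, v, hv, huv, h1, h2⟩
        · rcases Finset.mem_union.mp (hun ▸ hv) with hd | hd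
          · exact ⟨v, hd, u, hu, Ne.symm huv, h2, h1⟩
          · rcases hc2 (Finset.mem_coe.mpr hc) (Finset.mem_coe.mpr hd) huv with h | h
            · exact absurd h h1
            · exact absurd h h2
      have hwit2 : ∀ u v : P, u ∈ S' → v ∈ S' → u ≠ v → ¬ u ≤ v → ¬ v ≤ u →
          ∃ x ∈ C2, ∃ y ∈ S', x ≠ y ∧ ¬ x ≤ y ∧ ¬ y ≤ x := by
        intro u v hu hv huv h1 h2
        rcases Finset.mem_union.mp (hun ▸ hu) with hc | hc
        · rcases Finset.mem_union.mp (hun ▸ hv) with hd | hd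
          · rcases hc1 (Finset.mem_coe.mpr hc) (Finset.mem_coe.mpr hd) huv with h | h
            · exact absurd h h1
            · exact absurd h h2
          · exact ⟨v, hd, u, hu, Ne.symm huv, h2, h1⟩
        · exact ⟨u, hc, v, hv, huv, h1, h2⟩
      have topwit : ∀ (D : Finset P), IsChain (· ≤ ·) (D : Set P) →
          (∃ x ∈ D, ∃ y ∈ S', x ≠ y ∧ ¬ x ≤ y ∧ ¬ y ≤ x) →
          ∃ a1 ∈ D, (∃ y ∈ S', a1 ≠ y ∧ ¬ a1 ≤ y ∧ ¬ y ≤ a1) ∧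
            ∀ x ∈ D, (∃ y ∈ S', x ≠ y ∧ ¬ x ≤ y ∧ ¬ y ≤ x) → x ≤ a1 := by
        intro D hD hex
        set W := D.filter (fun x => ∃ y ∈ S', x ≠ y ∧ ¬ x ≤ y ∧ ¬ y ≤ x) with hW
        obtain ⟨m0, hm0⟩ : W.Nonempty := by
          obtain ⟨x, hx, hy⟩ := hex
          exact ⟨x, Finset.mem_filter.mpr ⟨hx, hy⟩⟩
        obtain ⟨a1, _, hmaxi⟩ := W.exists_le_maximal hm0
        have ha1W := hmaxi.1
        refine ⟨a1, (Finset.mem_filter.mp ha1W).1, (Finset.mem_filter.mp ha1W).2, ?_⟩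
        intro x hx hxw
        have hxW : x ∈ W := Finset.mem_filter.mpr ⟨hx, hxw⟩
        by_cases hxa : x = a1
        · exact hxa ▸ le_rfl
        · rcases hD (Finset.mem_coe.mpr hx) (Finset.mem_coe.mpr (Finset.mem_filter.mp ha1W).1)
            hxa with h | h
          · exact h
          · exact hmaxi.2 hxW h
      obtain ⟨a1, ha1C, ⟨b, hbS, hab1, hib1, hib2⟩, hgr1⟩ :=
        topwit C1 hc1 (hwit u0 v0 hu0 hv0 hne0 hnc1 hnc2)
      obtain ⟨a2, ha2C, ⟨c, hcS, hac1, hic1, hic2⟩, hgr2⟩ :=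
        topwit C2 hc2 (hwit2 u0 v0 hu0 hv0 hne0 hnc1 hnc2)
      -- b ∈ C2, c ∈ C1
      have hbC2 : b ∈ C2 := by
        rcases Finset.mem_union.mp (hun ▸ hbS) with h | h
        · rcases hc1 (Finset.mem_coe.mpr ha1C) (Finset.mem_coe.mpr h) hab1 with hh | hh
          · exact absurd hh hib1
          · exact absurd hh hib2
        · exact h
      have hcC1 : c ∈ C1 := by
        rcases Finset.mem_union.mp (hun ▸ hcS) with h | h
        · exact h
        · rcases hc2 (Finset.mem_coe.mpr ha2C) (Finset.mem_coe.mpr h) hac1 with hh | hh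
          · exact absurd hh hic1
          · exact absurd hh hic2
      have ha1S' : a1 ∈ S' := hC1S' ha1C
      have ha2S' : a2 ∈ S' := hC2S' ha2C
      have hba2 : b ≤ a2 := hgr2 b hbC2 ⟨a1, ha1S', Ne.symm hab1, hib2, hib1⟩
      have hca1 : c ≤ a1 := hgr1 c hcC1 ⟨a2, ha2S', Ne.symm hac1, hic2, hic1⟩
      have hinc12 : ¬ a1 ≤ a2 ∧ ¬ a2 ≤ a1 := by
        constructor
        · intro h
          exact hic2 (le_trans hca1 h)
        · intro h
          exact hib2 (le_trans hba2 h)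
      have hne12 : a1 ≠ a2 := fun hh => hinc12.1 (hh ▸ le_rfl)
      have hcomp : a1 ≤ a ∨ a2 ≤ a := by
        by_contra hno
        push_neg at hno
        have h1 : ¬ a ≤ a1 := fun hh => hno.1 (hamax.2 (hS'S ha1S') hh)
        have h2 : ¬ a ≤ a2 := fun hh => hno.2 (hamax.2 (hS'S ha2S') hh)
        exact h3 a haS a1 (hS'S ha1S') a2 (hS'S ha2S')
          (fun hh => hnaS' (hh ▸ ha1S')) (fun hh => hnaS' (hh ▸ ha2S')) hne12
          h1 hno.1 h2 hno.2 hinc12.1 hinc12.2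
      rcases hcomp with h | h
      · exact key C1 C2 a1 hc1 hc2 hun ha1C hgr1 h
      · exact key C2 C1 a2 hc2 hc1 (by rw [Finset.union_comm]; exact hun) ha2C hgr2 h

/-- Any finite chain can be listed in strictly increasing order. -/
lemma TA.chain_to_list [DecidableEq P] : ∀ (C : Finset P), IsChain (· ≤ ·) (C : Set P) →
    ∃ l : List P, List.Pairwise (· < ·) l ∧ ∀ x : P, x ∈ l ↔ x ∈ C := by
  classical
  intro C
  induction C using Finset.strongInduction with
  | _ C ih =>
  intro hc
  rcases C.eq_empty_or_nonempty with rfl | hne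
  · exact ⟨[], List.Pairwise.nil, by simp⟩
  · obtain ⟨x₀, hx₀⟩ := hne
    obtain ⟨m, _, hmin⟩ := C.exists_le_minimal hx₀
    have hmC : m ∈ C := hmin.1
    have hleast : ∀ x ∈ C, m ≤ x := by
      intro x hx
      by_cases hxm : x = m
      · exact hxm ▸ le_rfl
      · rcases hc (Finset.mem_coe.mpr hmC) (Finset.mem_coe.mpr hx) (Ne.symm hxm) with h | h
        · exact h
        · exact hmin.2 hx h
    obtain ⟨l, hsort, hmem⟩ := ih (C.erase m) (Finset.erase_ssubset hmC)
      (fun x hx y hy hxy => hc (Finset.mem_coe.mpr (Finset.mem_of_mem_erase hx))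
        (Finset.mem_coe.mpr (Finset.mem_of_mem_erase hy)) hxy)
    refine ⟨m :: l, ?_, ?_⟩
    · rw [List.pairwise_cons]
      refine ⟨?_, hsort⟩
      intro b hb
      have hbC := (hmem b).mp hb
      have hbm : b ≠ m := (Finset.mem_erase.mp hbC).1
      exact lt_of_le_of_ne (hleast b (Finset.mem_of_mem_erase hbC)) (Ne.symm hbm)
    · intro x
      simp only [List.mem_cons, hmem, Finset.mem_erase]
      constructor
      · rintro (rfl | ⟨_, h⟩)
        · exact hmC
        · exact h
      · intro hx
        by_cases hxm : x = m
        · exact Or.inl hxm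
        · exact Or.inr ⟨hxm, hx⟩

section Assemble

variable [Nonempty P]

/-- Gluing a new cone layout on the left of an existing good layout. -/
lemma TA.assemble {A A' : Set P} (z₀ : P) (c2l c1l Rest : List P) (orest : ℕ → Bool)
    (h2s : List.Pairwise (· < ·) c2l) (h1s : List.Pairwise (· < ·) c1l)
    (h2lt : ∀ x ∈ c2l, x < z₀) (h1lt : ∀ x ∈ c1l, x < z₀)
    (hdisj12 : ∀ x ∈ c2l, x ∉ c1l)
    (grest : TA.GoodL A' Rest orest)
    (hrge2 : 2 ≤ Rest.length → orest 0 = true)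
    (hjunc : ∀ w, Rest.head? = some w → ∀ u, (u = z₀ ∨ u ∈ c1l) → w < u)
    (hjmin : ∀ w, Rest.head? = some w → ∀ y : P, y ≤ w → y = w)
    (hcross1 : ∀ x, (x ∈ c2l ∨ x = z₀ ∨ x ∈ c1l) → ∀ y ∈ Rest, ¬ x < y)
    (hcross2 : ∀ y ∈ Rest, ∀ x, (x ∈ c2l ∨ x = z₀ ∨ x ∈ c1l) → y < x → Rest.head? = some y)
    (hdisjR : ∀ x, (x ∈ c2l ∨ x = z₀ ∨ x ∈ c1l) → x ∉ Rest)
    (hAmem : ∀ x : P, (x ∈ c2l ∨ x = z₀ ∨ x ∈ c1l ∨ x ∈ A') ↔ x ∈ A) :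
    TA.GoodL A (c2l ++ z₀ :: (c1l.reverse ++ Rest))
      (fun r => if r < c2l.length then true
        else if r < c2l.length + 1 + c1l.length then false
        else orest (r - (c2l.length + 1 + c1l.length))) := by
  classical
  set peak := c2l.length with hpeak
  set off := c2l.length + 1 + c1l.length with hoff
  set L : List P := c2l ++ z₀ :: (c1l.reverse ++ Rest) with hLdef
  set o : ℕ → Bool := fun r => if r < peak then true
      else if r < off then false else orest (r - off) with hodef
  have hLlen : L.length = off + Rest.length := by
    simp only [hLdef, List.length_append, List.length_cons, List.length_reverse]
    omega
  have hpo : peak < off := by omega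
  have ho1 : ∀ r, r < peak → o r = true := by
    intro r hr; simp only [hodef]; rw [if_pos hr]
  have ho2 : ∀ r, peak ≤ r → r < off → o r = false := by
    intro r h1 h2; simp only [hodef]; rw [if_neg (by omega), if_pos h2]
  have ho3 : ∀ r, off ≤ r → o r = orest (r - off) := by
    intro r h; simp only [hodef]; rw [if_neg (by omega), if_neg (by omega)]
  have hLsplit : L = (c2l ++ z₀ :: c1l.reverse) ++ Rest := by
    simp [hLdef, List.append_assoc]
  have hlowlen : (c2l ++ z₀ :: c1l.reverse).length = off := by
    simp only [List.length_append, List.length_cons, List.length_reverse]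
    omega
  have hgd_get : ∀ (l : List P) (i : ℕ) (h : i < l.length), TA.gd l i = l.get ⟨i, h⟩ := by
    intro l i h
    rw [TA.gd, List.getD_eq_getElem _ _ h]
    rfl
  have hmem_gd : ∀ (l : List P) (i : ℕ), i < l.length → TA.gd l i ∈ l := by
    intro l i h
    rw [hgd_get l i h]
    exact List.get_mem l ⟨i, h⟩
  have hgd_inj : ∀ (l : List P), l.Nodup → ∀ (i j : ℕ), i < l.length → j < l.length →
      TA.gd l i = TA.gd l j → i = j := by
    intro l hnd i j hi hj hij
    rw [hgd_get l i hi, hgd_get l j hj] at hij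
    have := hnd.get_inj_iff.mp hij
    exact congrArg Fin.val this
  have hgRest : ∀ j : ℕ, TA.gd L (off + j) = TA.gd Rest j := by
    intro j
    rw [hLsplit, TA.gd, TA.gd, List.getD_append_right _ _ _ _ (by rw [hlowlen]; omega)]
    congr 1
    rw [hlowlen]
    omega
  have hgc2 : ∀ i : ℕ, i < peak → TA.gd L i = TA.gd c2l i := by
    intro i hi
    rw [hLsplit, TA.gd, List.getD_append _ _ _ _ (by rw [hlowlen]; omega),
      List.getD_append _ _ _ _ hi]
    rfl
  have hgz : TA.gd L peak = z₀ := by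
    rw [hLsplit, TA.gd, List.getD_append _ _ _ _ (by rw [hlowlen]; omega),
      List.getD_append_right _ _ _ _ (le_refl peak)]
    simp [hpeak]
  have hgc1 : ∀ j : ℕ, j < c1l.length → TA.gd L (peak + 1 + j) = TA.gd c1l.reverse j := by
    intro j hj
    rw [hLsplit, TA.gd, List.getD_append _ _ _ _ (by rw [hlowlen]; omega),
      List.getD_append_right _ _ _ _ (by omega)]
    have : peak + 1 + j - c2l.length = j + 1 := by omega
    rw [this, TA.gd, List.getD_cons_succ]
  have hsort2 : ∀ i j : ℕ, i < j → (hj : j < c2l.length) → TA.gd c2l i < TA.gd c2l j := by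
    intro i j hij hj
    rw [hgd_get _ i (by omega), hgd_get _ j hj]
    exact List.pairwise_iff_get.mp h2s ⟨i, by omega⟩ ⟨j, hj⟩ (Fin.mk_lt_mk.mpr hij)
  have hrevp : c1l.reverse.Pairwise (fun a b => b < a) := by
    rw [List.pairwise_reverse]
    exact h1s
  have hsortrev : ∀ i j : ℕ, i < j → (hj : j < c1l.length) →
      TA.gd c1l.reverse j < TA.gd c1l.reverse i := by
    intro i j hij hj
    rw [hgd_get _ i (by simp; omega), hgd_get _ j (by simp; omega)]
    exact List.pairwise_iff_get.mp hrevp ⟨i, by simp; omega⟩ ⟨j, by simp; omega⟩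
      (Fin.mk_lt_mk.mpr hij)
  have hclass : ∀ i : ℕ, i < off → (TA.gd L i ∈ c2l ∨ TA.gd L i = z₀ ∨ TA.gd L i ∈ c1l) := by
    intro i hio
    by_cases h1 : i < peak
    · left
      rw [hgc2 i h1]
      exact hmem_gd c2l i h1
    · by_cases h2 : i = peak
      · right; left
        rw [h2, hgz]
      · right; right
        obtain ⟨j, rfl⟩ : ∃ j, i = peak + 1 + j := ⟨i - peak - 1, by omega⟩
        have hj : j < c1l.length := by omega
        rw [hgc1 j hj]
        exact List.mem_reverse.mp (hmem_gd c1l.reverse j (by simp; omega))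
  have hheadgd : ∀ (l : List P), l ≠ [] → l.head? = some (TA.gd l 0) := by
    intro l hl
    cases l with
    | nil => exact absurd rfl hl
    | cons a t => simp [TA.gd]
  refine ⟨?_, ?_, ?_, ?_, ?_⟩
  · -- mem
    intro x
    rw [← hAmem x, hLsplit]
    simp only [List.mem_append, List.mem_cons, List.mem_reverse, grest.mem x]
    tauto
  · -- nodup
    have h2nd : c2l.Nodup := h2s.nodup
    have h1nd : c1l.Nodup := h1s.nodup
    rw [hLsplit, List.nodup_append]
    refine ⟨?_, grest.nodup, ?_⟩
    · rw [List.nodup_append]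
      refine ⟨h2nd, List.nodup_cons.mpr ⟨?_, List.nodup_reverse.mpr h1nd⟩, ?_⟩
      · intro hh
        exact absurd (h1lt z₀ (List.mem_reverse.mp hh)) (lt_irrefl z₀)
      · intro x hx y hcontra hxy; subst hxy
        rcases List.mem_cons.mp hcontra with h | hh
        · exact lt_irrefl z₀ (h ▸ h2lt x hx)
        · exact hdisj12 x hx (List.mem_reverse.mp hh)
    · intro x hx y hy hxy; subst hxy; revert hy
      simp only [List.mem_append, List.mem_cons, List.mem_reverse] at hx
      rcases hx with hx | hx | hx
      · exact hdisjR x (Or.inl hx)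
      · exact hdisjR x (Or.inr (Or.inl hx))
      · exact hdisjR x (Or.inr (Or.inr hx))
  · -- orient
    intro i hi1
    rw [hLlen] at hi1
    constructor
    · intro hoi
      by_cases hip : i < peak
      · by_cases hip1 : i + 1 < peak
        · rw [hgc2 i hip, hgc2 (i+1) hip1]
          exact hsort2 i (i+1) (by omega) hip1
        · have hpe : i + 1 = peak := by omega
          rw [hgc2 i hip, hpe, hgz]
          exact h2lt _ (hmem_gd c2l i hip)
      · have hio : off ≤ i := by
          by_contra hh
          push_neg at hh
          rw [ho2 i (by omega) hh] at hoi
          exact Bool.false_ne_true hoi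
        obtain ⟨j, rfl⟩ : ∃ j, i = off + j := ⟨i - off, by omega⟩
        have hj1 : j + 1 < Rest.length := by omega
        have horj : orest j = true := by
          have h := ho3 (off + j) hio
          rw [show off + j - off = j by omega] at h
          rw [← h]
          exact hoi
        rw [hgRest j, show off + j + 1 = off + (j+1) by omega, hgRest (j+1)]
        exact (grest.orient j hj1).1 horj
    · intro hoi
      have hip : ¬ i < peak := by
        intro hh
        rw [ho1 i hh] at hoi
        simp at hoi
      by_cases hio : i < off
      · by_cases hie : i = peak
        · subst hie
          by_cases hne : peak + 1 < off
          · have h0 : (0 : ℕ) < c1l.length := by omega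
            rw [hgz, show peak + 1 = peak + 1 + 0 by omega, hgc1 0 h0]
            exact h1lt _ (List.mem_reverse.mp (hmem_gd c1l.reverse 0 (by simp; omega)))
          · -- c1l empty : next position is Rest head
            have hoffeq : peak + 1 = off := by omega
            have hRne : Rest ≠ [] := by
              intro hh
              rw [hh] at hi1
              simp only [List.length_nil, Nat.add_zero] at hi1
              omega
            have hw := hjunc _ (hheadgd Rest hRne) z₀ (Or.inl rfl)
            rw [hgz, hoffeq, show off = off + 0 by omega, hgRest 0]
            exact hw
        · obtain ⟨j, rfl⟩ : ∃ j, i = peak + 1 + j := ⟨i - peak - 1, by omega⟩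
          have hj : j < c1l.length := by omega
          by_cases hip1 : peak + 1 + j + 1 < off
          · have hj1 : j + 1 < c1l.length := by omega
            rw [hgc1 j hj, show peak + 1 + j + 1 = peak + 1 + (j + 1) by omega, hgc1 (j+1) hj1]
            exact hsortrev j (j+1) (by omega) hj1
          · -- last element of the c1l band; next is Rest head
            have hoffeq : peak + 1 + j + 1 = off := by omega
            have hRne : Rest ≠ [] := by
              intro hh
              rw [hh] at hi1
              simp only [List.length_nil, Nat.add_zero] at hi1
              omega
            have hw := hjunc _ (hheadgd Rest hRne) (TA.gd c1l.reverse j)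
              (Or.inr (List.mem_reverse.mp (hmem_gd c1l.reverse j (by simp; omega))))
            rw [hgc1 j hj, hoffeq, show off = off + 0 by omega, hgRest 0]
            exact hw
      · -- i ≥ off
        push_neg at hio
        obtain ⟨j, rfl⟩ : ∃ j, i = off + j := ⟨i - off, by omega⟩
        have hj1 : j + 1 < Rest.length := by omega
        have horj : orest j = false := by
          have h := ho3 (off + j) hio
          rw [show off + j - off = j by omega] at h
          rw [← h]
          exact hoi
        rw [hgRest j, show off + j + 1 = off + (j+1) by omega, hgRest (j+1)]
        exact (grest.orient j hj1).2 horj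
  · -- srcmin
    intro q hq0 hq1 hfalse htrue y hy
    rw [hLlen] at hq1
    by_cases hqp : q < peak
    · exfalso
      rw [ho1 (q-1) (by omega)] at hfalse
      simp at hfalse
    · by_cases hqo : q < off
      · exfalso
        rw [ho2 q (by omega) hqo] at htrue
        exact Bool.false_ne_true htrue
      · push_neg at hqo
        by_cases hj0 : q = off
        · -- q is the head of Rest
          subst hj0
          have hRne : Rest ≠ [] := by
            intro hh
            rw [hh] at hq1
            simp only [List.length_nil, Nat.add_zero] at hq1
            omega
          have hq' : TA.gd L off = TA.gd Rest 0 := by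
            rw [show off = off + 0 by omega, hgRest 0]
          rw [hq'] at hy ⊢
          exact hjmin _ (hheadgd Rest hRne) y hy
        · obtain ⟨j, rfl⟩ : ∃ j, q = off + j := ⟨q - off, by omega⟩
          have hj0' : 0 < j := by omega
          have hfalse' : orest (j - 1) = false := by
            have h := ho3 (off + j - 1) (by omega)
            rw [show off + j - 1 - off = j - 1 by omega] at h
            rw [← h]
            rw [show off + j - 1 = off + j - 1 from rfl] at hfalse
            exact hfalse
          have htrue' : orest j = true := by
            have h := ho3 (off + j) (by omega)
            rw [show off + j - off = j by omega] at h
            rw [← h]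
            exact htrue
          have := grest.srcmin j hj0' (by omega) hfalse' htrue'
          rw [hgRest j] at hy ⊢
          exact this y hy
  · -- covers
    intro i j hiL hjL hcov hnadj
    rw [hLlen] at hiL hjL
    have shiftcase : ∀ i j : ℕ, off ≤ i → off ≤ j → i < off + Rest.length →
        j < off + Rest.length → TA.gd L i ⋖ TA.gd L j → ¬ TA.AdjA o i j →
        ∃ p : ℕ, p < L.length ∧ (p = 0 ∨ o (p-1) = true) ∧ (p + 1 = L.length ∨ o p = false) ∧
          TA.Tow o i p ∧ TA.Tow o j p := by
      clear hcov hnadj hiL hjL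
      intro i j hi hj hiL hjL hcov hnadj
      have hij : i ≠ j := fun hh => absurd hcov.lt (hh ▸ lt_irrefl _)
      have hRlen2 : 2 ≤ Rest.length := by omega
      have ho0 := hrge2 hRlen2
      have e1 : TA.gd Rest (i - off) = TA.gd L i := by
        rw [← hgRest (i - off)]
        congr 1
        omega
      have e2 : TA.gd Rest (j - off) = TA.gd L j := by
        rw [← hgRest (j - off)]
        congr 1
        omega
      have hcov' : TA.gd Rest (i - off) ⋖ TA.gd Rest (j - off) := by
        rw [e1, e2]
        exact hcov
      have hnadj' : ¬ TA.AdjA orest (i - off) (j - off) := by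
        rintro (⟨h1, h2⟩ | ⟨h1, h2⟩)
        · refine hnadj (Or.inl ⟨by omega, ?_⟩)
          rw [ho3 i hi]
          exact h2
        · refine hnadj (Or.inr ⟨by omega, ?_⟩)
          rw [ho3 j hj]
          exact h2
      obtain ⟨p', hp', hsl', hsr', t1', t2'⟩ := grest.covers (i - off) (j - off)
        (by omega) (by omega) hcov' hnadj'
      have hp'0 : p' ≠ 0 := by
        intro hh
        subst hh
        rcases hsr' with h | h
        · omega
        · rw [ho0] at h
          simp at h
      refine ⟨off + p', by rw [hLlen]; omega, ?_, ?_, ?_, ?_⟩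
      · right
        rw [show off + p' - 1 = off + (p' - 1) by omega, ho3 _ (by omega),
          show off + (p' - 1) - off = p' - 1 by omega]
        rcases hsl' with h | h
        · exact absurd h hp'0
        · exact h
      · rcases hsr' with h | h
        · left
          rw [hLlen]
          omega
        · right
          rw [ho3 _ (by omega), show off + p' - off = p' by omega]
          exact h
      · rcases t1' with ⟨hle, hall⟩ | ⟨hle, hall⟩
        · left
          refine ⟨by omega, fun r hr1 hr2 => ?_⟩
          rw [ho3 r (by omega)]
          exact hall (r - off) (by omega) (by omega)
        · right
          refine ⟨by omega, fun r hr1 hr2 => ?_⟩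
          rw [ho3 r (by omega)]
          exact hall (r - off) (by omega) (by omega)
      · rcases t2' with ⟨hle, hall⟩ | ⟨hle, hall⟩
        · left
          refine ⟨by omega, fun r hr1 hr2 => ?_⟩
          rw [ho3 r (by omega)]
          exact hall (r - off) (by omega) (by omega)
        · right
          refine ⟨by omega, fun r hr1 hr2 => ?_⟩
          rw [ho3 r (by omega)]
          exact hall (r - off) (by omega) (by omega)
    have peakcase : ∀ i j : ℕ, i ≤ off → j ≤ off →
        ∃ p : ℕ, p < L.length ∧ (p = 0 ∨ o (p-1) = true) ∧ (p + 1 = L.length ∨ o p = false) ∧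
          TA.Tow o i p ∧ TA.Tow o j p := by
      clear hcov hnadj hiL hjL
      have towp : ∀ i : ℕ, i ≤ off → TA.Tow o i peak := by
        intro i hi
        by_cases hip : i ≤ peak
        · exact Or.inl ⟨hip, fun r h1 h2 => ho1 r h2⟩
        · exact Or.inr ⟨by omega, fun r h1 h2 => ho2 r h1 (by omega)⟩
      intro i j hi hj
      refine ⟨peak, by rw [hLlen]; omega, ?_, Or.inr (ho2 peak le_rfl hpo), towp i hi, towp j hj⟩
      by_cases hp0 : peak = 0
      · exact Or.inl hp0
      · exact Or.inr (ho1 _ (by omega))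
    by_cases hio : off < i
    · by_cases hjo : off ≤ j
      · exact shiftcase i j (by omega) hjo (by omega) (by omega) hcov hnadj
      · exfalso
        push_neg at hjo
        have hx : TA.gd L i ∈ Rest := by
          have e1 : TA.gd Rest (i - off) = TA.gd L i := by
            rw [← hgRest (i - off)]
            congr 1
            omega
          rw [← e1]
          exact hmem_gd Rest (i - off) (by omega)
        have hhd := hcross2 _ hx _ (hclass j hjo) hcov.lt
        -- so gd L i is the head of Rest, i.e. index 0
        have hRne : Rest ≠ [] := by
          intro hh
          rw [hh] at hx
          exact List.not_mem_nil hx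
        rw [hheadgd Rest hRne] at hhd
        have h0 := Option.some.inj hhd
        have e1 : TA.gd Rest (i - off) = TA.gd L i := by
          rw [← hgRest (i - off)]
          congr 1
          omega
        have : i - off = 0 := by
          apply hgd_inj Rest grest.nodup _ _ (by omega) (by omega)
          rw [e1]
          exact h0.symm
        omega
    · by_cases hjo : j ≤ off
      · exact peakcase i j (by omega) hjo
      · push_neg at hio hjo
        by_cases hieq : i = off
        · exact shiftcase i j (by omega) (by omega) (by omega) (by omega) hcov hnadj
        · exfalso
          have hy : TA.gd L j ∈ Rest := by
            have e2 : TA.gd Rest (j - off) = TA.gd L j := by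
              rw [← hgRest (j - off)]
              congr 1
              omega
            rw [← e2]
            exact hmem_gd Rest (j - off) (by omega)
          exact hcross1 _ (hclass i (by omega)) _ hy hcov.lt

end Assemble

lemma TA.goodL_nil [Nonempty P] (o : ℕ → Bool) : TA.GoodL (∅ : Set P) [] o := by
  refine ⟨by simp, List.nodup_nil, ?_, ?_, ?_⟩
  · intro i hi
    simp at hi
  · intro q _ hq
    simp at hq
  · intro i j hi
    simp at hi

lemma TA.head_of_min [Nonempty P] (l : List P) (hs : List.Pairwise (· < ·) l) (w : P)
    (hw : w ∈ l) (hmin : TA.Mn w) : l.head? = some w := by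
  cases l with
  | nil => simp at hw
  | cons a t =>
    rcases List.mem_cons.mp hw with rfl | hh
    · simp
    · have ha : a < w := (List.pairwise_cons.mp hs).1 w hh
      exact absurd (hmin a ha.le) (ne_of_lt ha)

lemma TA.head_append_cons (c2l rest : List P) (z₀ : P) :
    ∀ w : P, c2l.head? = some w → (c2l ++ z₀ :: rest).head? = some w := by
  intro w hw
  cases c2l with
  | nil => simp at hw
  | cons a t => simpa using hw

lemma TA.gd_zero_of_head [Nonempty P] (l : List P) (w : P) (hw : l.head? = some w) :
    TA.gd l 0 = w := by
  cases l with
  | nil => simp at hw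
  | cons a t =>
    simp only [List.head?_cons, Option.some.injEq] at hw
    simpa [TA.gd] using hw

/-- The main inductive construction of a good layout. -/
lemma TA.main [Nonempty P]
    (hR1 : ¬ ContainsR1 (fun x y : P => x ≤ y))
    (hR2 : ¬ ContainsR2 (fun x y : P => x ≤ y))
    (hR3 : ¬ ContainsR3 (fun x y : P => x ≤ y))
    (hcr : ∀ k, ¬ ContainsCrown (fun x y : P => x ≤ y) k) :
    ∀ (N : ℕ) (A : Set P), A.ncard ≤ N →
      IsLowerSet A →
      (∀ x ∈ A, ∃ z, TA.Mx z ∧ z ∈ A ∧ x ≤ z) →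
      (∀ z z', TA.Mx z → z ∈ A → TA.Mx z' → z' ∈ A →
        Relation.ReflTransGen (TA.NbrR A) z z') →
      ∀ z₀ : P, TA.Mx z₀ → z₀ ∈ A →
      (∀ a b, TA.NbrR A z₀ a → TA.NbrR A z₀ b → a = b) →
      ∀ wopt : Option P,
        (∀ w₀ ∈ wopt, w₀ ∈ A ∧ TA.Mn w₀ ∧ w₀ ≤ z₀ ∧
          (∀ z, TA.Mx z → z ∈ A → w₀ ≤ z → z = z₀)) →
      ∃ (L : List P) (o : ℕ → Bool), TA.GoodL A L o ∧ (∀ w₀ ∈ wopt, L.head? = some w₀) := by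
  classical
  intro N
  induction N with
  | zero =>
    intro A hcard _ _ _ z₀ _ hz₀A _ _ _
    exfalso
    have hA0 : A.ncard = 0 := by omega
    have : A = ∅ := (Set.ncard_eq_zero (Set.toFinite A)).mp hA0
    rw [this] at hz₀A
    exact hz₀A
  | succ N ih =>
    intro A hcard hlow hyp2 hconn z₀ hmz₀ hz₀A hend wopt hwopt
    have hconeA : ∀ x : P, x ≤ z₀ → x ∈ A := fun x h => hlow h hz₀A
    set Sf : Finset P := Finset.univ.filter (fun x => x ≤ z₀ ∧ x ≠ z₀) with hSfdef
    have hSf : ∀ x : P, x ∈ Sf ↔ (x ≤ z₀ ∧ x ≠ z₀) := by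
      intro x
      simp [hSfdef]
    have hSflt : ∀ x ∈ Sf, x < z₀ := by
      intro x hx
      have := (hSf x).mp hx
      exact lt_of_le_of_ne this.1 this.2
    have h3' : ∀ a ∈ Sf, ∀ b ∈ Sf, ∀ c ∈ Sf, a ≠ b → a ≠ c → b ≠ c →
        ¬ a ≤ b → ¬ b ≤ a → ¬ a ≤ c → ¬ c ≤ a → ¬ b ≤ c → ¬ c ≤ b → False := by
      intro a ha b hb c hc hab hac hbc i1 i2 i3 i4 i5 i6
      exact TA.no_three_below hR1 hmz₀ hab hac hbc ⟨i1, i2⟩ ⟨i3, i4⟩ ⟨i5, i6⟩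
        (hSflt a ha) (hSflt b hb) (hSflt c hc)
    obtain ⟨C1, C2, hc1, hc2, hun, hdisj⟩ := TA.dilworth2 Sf h3'
    by_cases hnbr : ∃ z', TA.NbrR A z₀ z'
    · -- inductive step : remove the cone of `z₀`
      obtain ⟨z', hnbz'⟩ := hnbr
      obtain ⟨hne', _, hmz', _, hz'A, w', hw'z₀, hw'z'⟩ := hnbz'
      have hnbz : TA.NbrR A z₀ z' := ⟨hne', hmz₀, hmz', hz₀A, hz'A, w', hw'z₀, hw'z'⟩
      have huniq : ∀ b, TA.NbrR A z₀ b → b = z' := fun b hb => hend b z' hb hnbz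
      have hw'min : TA.Mn w' := TA.min_of_two hR2 hmz₀ hmz' hne' hw'z₀ hw'z'
      have hw'uniq : ∀ x : P, x ≤ z₀ → x ≤ z' → x = w' :=
        fun x h1 h2 => TA.unique_bound hR2 hcr hmz₀ hmz' hne' h1 h2 hw'z₀ hw'z'
      have hw'ne : w' ≠ z₀ := by
        intro hh
        have h1 : z₀ ≤ z' := hh ▸ hw'z'
        exact hne' (le_antisymm h1 (hmz₀ z' h1))
      have hw'ltz₀ : w' < z₀ := lt_of_le_of_ne hw'z₀ hw'ne
      have hw'nez' : w' ≠ z' := by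
        intro hh
        have h1 : z' ≤ z₀ := hh ▸ hw'z₀
        exact hne' (le_antisymm (hmz' z₀ h1) h1)
      set A' : Set P := A \ {x | x ≤ z₀ ∧ x ≠ w'} with hA'def
      have hmemA' : ∀ x : P, x ∈ A' ↔ x ∈ A ∧ (x ≤ z₀ → x = w') := by
        intro x
        simp only [hA'def, Set.mem_diff, Set.mem_setOf_eq]
        constructor
        · rintro ⟨h1, h2⟩
          refine ⟨h1, fun h3 => ?_⟩
          by_contra h4
          exact h2 ⟨h3, h4⟩
        · rintro ⟨h1, h2⟩
          exact ⟨h1, fun hh => hh.2 (h2 hh.1)⟩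
      have hz'A' : z' ∈ A' := by
        rw [hmemA']
        exact ⟨hz'A, fun h => absurd (le_antisymm (hmz' z₀ h) h) hne'⟩
      have hw'A' : w' ∈ A' := by
        rw [hmemA']
        exact ⟨hconeA w' hw'z₀, fun _ => rfl⟩
      have hz₀notA' : z₀ ∉ A' := by
        rw [hmemA']
        rintro ⟨_, h⟩
        exact hw'ne (h le_rfl).symm
      have hmaxA' : ∀ z, TA.Mx z → z ∈ A' → z ≠ z₀ := by
        intro z _ hzA' hh
        exact hz₀notA' (hh ▸ hzA')
      have hA'A : A' ⊆ A := Set.diff_subset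
      have hmaxup : ∀ z, TA.Mx z → z ∈ A → z ≠ z₀ → z ∈ A' := by
        intro z hz hzA hzz
        rw [hmemA']
        exact ⟨hzA, fun h => absurd (le_antisymm h (hz z₀ h)) hzz⟩
      have hyp2' : ∀ x ∈ A', ∃ z, TA.Mx z ∧ z ∈ A' ∧ x ≤ z := by
        intro x hx
        obtain ⟨z, hz, hzA, hxz⟩ := hyp2 x (hA'A hx)
        by_cases hzz : z = z₀
        · subst hzz
          have hxw : x = w' := ((hmemA' x).mp hx).2 hxz
          exact ⟨z', hmz', hz'A', hxw ▸ hw'z'⟩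
        · exact ⟨z, hz, hmaxup z hz hzA hzz, hxz⟩
      have hlow' : IsLowerSet A' := by
        intro aa bb hba haa
        rw [hmemA']
        refine ⟨hlow hba (hA'A haa), fun hbz₀ => ?_⟩
        obtain ⟨z, hz, hzA', haz⟩ := hyp2' aa haa
        have hzne : z ≠ z₀ := hmaxA' z hz hzA'
        have hnn : TA.NbrR A z₀ z :=
          ⟨Ne.symm hzne, hmz₀, hz, hz₀A, hA'A hzA', bb, hbz₀, le_trans hba haz⟩
        have hzz' : z = z' := huniq z hnn
        exact hw'uniq bb hbz₀ (hzz' ▸ le_trans hba haz)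
      have hNtrans : ∀ a b, TA.NbrR A' a b → TA.NbrR A a b :=
        fun a b h => ⟨h.1, h.2.1, h.2.2.1, hA'A h.2.2.2.1, hA'A h.2.2.2.2.1, h.2.2.2.2.2⟩
      have hedge : ∀ a b, TA.NbrR A a b → a ≠ z₀ → b ≠ z₀ → TA.NbrR A' a b := by
        intro a b h haz hbz
        exact ⟨h.1, h.2.1, h.2.2.1, hmaxup a h.2.1 h.2.2.2.1 haz,
          hmaxup b h.2.2.1 h.2.2.2.2.1 hbz, h.2.2.2.2.2⟩
      have hNswap : ∀ a b, TA.NbrR A a b → TA.NbrR A b a := by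
        intro a b h
        obtain ⟨h1, h2, h3, h4, h5, x, h6, h7⟩ := h
        exact ⟨Ne.symm h1, h3, h2, h5, h4, x, h7, h6⟩
      have hconn' : ∀ za zb, TA.Mx za → za ∈ A' → TA.Mx zb → zb ∈ A' →
          Relation.ReflTransGen (TA.NbrR A') za zb := by
        intro za zb hza hzaA hzb hzbA
        set f : P → P := fun t => if t = z₀ then z' else t with hf
        have hstep : ∀ a b, TA.NbrR A a b →
            Relation.ReflTransGen (TA.NbrR A') (f a) (f b) := by
          intro a b hab
          by_cases haz : a = z₀
          · by_cases hbz : b = z₀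
            · exact absurd (haz.trans hbz.symm) hab.1
            · have hbz' : b = z' := huniq b (haz ▸ hab)
              have h1 : f a = z' := by simp [hf, haz]
              have h2 : f b = z' := by simp [hf, hbz, hbz']
              rw [h1, h2]
          · by_cases hbz : b = z₀
            · have haz' : a = z' := huniq a (hbz ▸ hNswap a b hab)
              have h1 : f a = z' := by simp [hf, haz, haz']
              have h2 : f b = z' := by simp [hf, hbz]
              rw [h1, h2]
            · have h1 : f a = a := by simp [hf, haz]
              have h2 : f b = b := by simp [hf, hbz]
              rw [h1, h2]
              exact Relation.ReflTransGen.single (hedge a b hab haz hbz)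
        have hmap : ∀ u v, Relation.ReflTransGen (TA.NbrR A) u v →
            Relation.ReflTransGen (TA.NbrR A') (f u) (f v) := by
          intro u v h
          induction h with
          | refl => exact Relation.ReflTransGen.refl
          | tail _ h2 ih2 => exact ih2.trans (hstep _ _ h2)
        have h0 := hconn za zb hza (hA'A hzaA) hzb (hA'A hzbA)
        have hfa : f za = za := by simp [hf, hmaxA' za hza hzaA]
        have hfb : f zb = zb := by simp [hf, hmaxA' zb hzb hzbA]
        rw [← hfa, ← hfb]
        exact hmap za zb h0
      have hend' : ∀ a b, TA.NbrR A' z' a → TA.NbrR A' z' b → a = b := by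
        intro a b ha hb
        by_contra hab
        exact TA.deg_le_two hR1 hR2 hR3 (hNtrans _ _ ha) (hNtrans _ _ hb) (hNswap _ _ hnbz)
          hab (hmaxA' a ha.2.2.1 ha.2.2.2.2.1) (hmaxA' b hb.2.2.1 hb.2.2.2.2.1)
      have hwopt' : ∀ w ∈ (some w' : Option P), w ∈ A' ∧ TA.Mn w ∧ w ≤ z' ∧
          (∀ z, TA.Mx z → z ∈ A' → w ≤ z → z = z') := by
        intro w hw
        obtain rfl : w' = w := by simpa using hw
        refine ⟨hw'A', hw'min, hw'z', ?_⟩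
        intro z hz hzA' hwz
        by_contra hzz
        exact TA.not_three hR3 hmz₀ hmz' hz hne' (Ne.symm (hmaxA' z hz hzA'))
          (fun hh => hzz hh.symm) hw'z₀ hw'z' hwz
      have hcard' : A'.ncard ≤ N := by
        have hss : A' ⊂ A := ⟨Set.diff_subset, fun h => hz₀notA' (h hz₀A)⟩
        have := Set.ncard_lt_ncard hss (Set.toFinite A)
        omega
      obtain ⟨L', o', good', hhead'⟩ := ih A' hcard' hlow' hyp2' hconn' z' hmz' hz'A' hend'
        (some w') hwopt'
      have hheadw' : L'.head? = some w' := hhead' w' (by simp)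
      have hgd0 : TA.gd L' 0 = w' := TA.gd_zero_of_head L' w' hheadw'
      have hw'L' : w' ∈ L' := (good'.mem w').mpr hw'A'
      have hz'L' : z' ∈ L' := (good'.mem z').mpr hz'A'
      have hlen2 : 2 ≤ L'.length := by
        rcases L' with _ | ⟨a, _ | ⟨b, t⟩⟩
        · simp at hw'L'
        · exfalso
          simp at hw'L' hz'L'
          exact hw'nez' (hw'L'.trans hz'L'.symm)
        · simp only [List.length_cons]
          omega
      have ho'0 : o' 0 = true := by
        by_contra hh
        have hfalse : o' 0 = false := by
          cases h0 : o' 0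
          · rfl
          · exact absurd h0 hh
        have hcontra := (good'.orient 0 (by omega)).2 hfalse
        rw [hgd0] at hcontra
        exact absurd (hw'min _ hcontra.le) (ne_of_lt hcontra)
      have hw'Sf : w' ∈ Sf := (hSf w').mpr ⟨hw'z₀, hw'ne⟩
      have hswap : ∃ D1 D2 : Finset P, IsChain (· ≤ ·) (D1 : Set P) ∧
          IsChain (· ≤ ·) (D2 : Set P) ∧ D1 ∪ D2 = Sf ∧ Disjoint D1 D2 ∧ w' ∈ D1 := by
        by_cases hw1 : w' ∈ C1
        · exact ⟨C1, C2, hc1, hc2, hun, hdisj, hw1⟩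
        · refine ⟨C2, C1, hc2, hc1, by rw [Finset.union_comm]; exact hun, hdisj.symm, ?_⟩
          rcases Finset.mem_union.mp (hun ▸ hw'Sf) with h | h
          · exact absurd h hw1
          · exact h
      obtain ⟨D1, D2, hd1, hd2, hdu, hddisj, hw'D1⟩ := hswap
      have hD1Sf : D1 ⊆ Sf := hdu ▸ Finset.subset_union_left
      have hD2Sf : D2 ⊆ Sf := hdu ▸ Finset.subset_union_right
      obtain ⟨c1l, h1s, h1mem⟩ := TA.chain_to_list (D1.erase w')
        (by
          intro x hx y hy hxy
          exact hd1 (Finset.mem_coe.mpr (Finset.mem_of_mem_erase (Finset.mem_coe.mp hx)))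
            (Finset.mem_coe.mpr (Finset.mem_of_mem_erase (Finset.mem_coe.mp hy))) hxy)
      obtain ⟨c2l, h2s, h2mem⟩ := TA.chain_to_list D2 hd2
      have hc1Sf : ∀ x ∈ c1l, x ∈ Sf :=
        fun x hx => hD1Sf (Finset.mem_of_mem_erase ((h1mem x).mp hx))
      have hc2Sf : ∀ x ∈ c2l, x ∈ Sf := fun x hx => hD2Sf ((h2mem x).mp hx)
      have hclassw : ∀ x : P, (x ∈ c2l ∨ x = z₀ ∨ x ∈ c1l) → x ≤ z₀ ∧ x ≠ w' := by
        intro x hx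
        rcases hx with hx | rfl | hx
        · refine ⟨(hSflt x (hc2Sf x hx)).le, ?_⟩
          intro hh
          exact Finset.disjoint_left.mp hddisj (hh ▸ hw'D1) ((h2mem x).mp hx)
        · exact ⟨le_rfl, Ne.symm hw'ne⟩
        · exact ⟨(hSflt x (hc1Sf x hx)).le, (Finset.mem_erase.mp ((h1mem x).mp hx)).1⟩
      have hcross1' : ∀ x : P, (x ∈ c2l ∨ x = z₀ ∨ x ∈ c1l) → ∀ y ∈ L', ¬ x < y := by
        intro x hx y hy hxy
        obtain ⟨hxz₀, hxw⟩ := hclassw x hx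
        have hyA' : y ∈ A' := (good'.mem y).mp hy
        obtain ⟨z, hz, hzA', hyz⟩ := hyp2' y hyA'
        have hzne : z ≠ z₀ := hmaxA' z hz hzA'
        have hnn : TA.NbrR A z₀ z :=
          ⟨Ne.symm hzne, hmz₀, hz, hz₀A, hA'A hzA', x, hxz₀, le_trans hxy.le hyz⟩
        have hzz' : z = z' := huniq z hnn
        exact hxw (hw'uniq x hxz₀ (hzz' ▸ le_trans hxy.le hyz))
      have hcross2' : ∀ y ∈ L', ∀ x : P, (x ∈ c2l ∨ x = z₀ ∨ x ∈ c1l) → y < x →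
          L'.head? = some y := by
        intro y hy x hx hyx
        have hyA' : y ∈ A' := (good'.mem y).mp hy
        have hyz₀ : y ≤ z₀ := le_trans hyx.le (hclassw x hx).1
        have hyw : y = w' := ((hmemA' y).mp hyA').2 hyz₀
        rw [hyw]
        exact hheadw'
      have hdisjR' : ∀ x : P, (x ∈ c2l ∨ x = z₀ ∨ x ∈ c1l) → x ∉ L' := by
        intro x hx hxL
        obtain ⟨hxz₀, hxw⟩ := hclassw x hx
        have hxA' : x ∈ A' := (good'.mem x).mp hxL
        exact hxw (((hmemA' x).mp hxA').2 hxz₀)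
      have hjunc' : ∀ w, L'.head? = some w → ∀ u, (u = z₀ ∨ u ∈ c1l) → w < u := by
        intro w hw u hu
        have hww : w = w' := by
          rw [hheadw'] at hw
          exact (Option.some.inj hw).symm
        rw [hww]
        rcases hu with rfl | hu
        · exact hw'ltz₀
        · have huD : u ∈ D1.erase w' := (h1mem u).mp hu
          have hune : u ≠ w' := (Finset.mem_erase.mp huD).1
          have huD1 : u ∈ D1 := Finset.mem_of_mem_erase huD
          rcases hd1 (Finset.mem_coe.mpr hw'D1) (Finset.mem_coe.mpr huD1) (Ne.symm hune)
            with h | h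
          · exact lt_of_le_of_ne h (Ne.symm hune)
          · exact absurd (hw'min u h) hune
      have hjmin' : ∀ w, L'.head? = some w → ∀ y : P, y ≤ w → y = w := by
        intro w hw
        have hww : w = w' := by
          rw [hheadw'] at hw
          exact (Option.some.inj hw).symm
        rw [hww]
        exact hw'min
      have hAmem' : ∀ x : P, (x ∈ c2l ∨ x = z₀ ∨ x ∈ c1l ∨ x ∈ A') ↔ x ∈ A := by
        intro x
        constructor
        · rintro (hx | rfl | hx | hx)
          · exact hconeA x (hSflt x (hc2Sf x hx)).le
          · exact hz₀A
          · exact hconeA x (hSflt x (hc1Sf x hx)).le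
          · exact hA'A hx
        · intro hx
          by_cases hxz₀ : x ≤ z₀
          · by_cases hxe : x = z₀
            · exact Or.inr (Or.inl hxe)
            · have hxSf : x ∈ Sf := (hSf x).mpr ⟨hxz₀, hxe⟩
              rcases Finset.mem_union.mp (hdu ▸ hxSf) with h | h
              · by_cases hxw : x = w'
                · exact Or.inr (Or.inr (Or.inr (hxw ▸ hw'A')))
                · exact Or.inr (Or.inr (Or.inl ((h1mem x).mpr
                    (Finset.mem_erase.mpr ⟨hxw, h⟩))))
              · exact Or.inl ((h2mem x).mpr h)
          · refine Or.inr (Or.inr (Or.inr ?_))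
            rw [hmemA']
            exact ⟨hx, fun h => absurd h hxz₀⟩
      have hdisj12' : ∀ x ∈ c2l, x ∉ c1l := by
        intro x hx hx1
        exact Finset.disjoint_left.mp hddisj
          (Finset.mem_of_mem_erase ((h1mem x).mp hx1)) ((h2mem x).mp hx)
      have hgood := TA.assemble (A' := A') z₀ c2l c1l L' o'
        h2s h1s
        (fun x hx => hSflt x (hc2Sf x hx))
        (fun x hx => hSflt x (hc1Sf x hx))
        hdisj12'
        good'
        (fun _ => ho'0)
        hjunc' hjmin' hcross1' hcross2' hdisjR' hAmem'
      refine ⟨_, _, hgood, ?_⟩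
      intro w₀ hw₀
      obtain ⟨hw₀A, hw₀min, hw₀z₀, hw₀un⟩ := hwopt w₀ hw₀
      have hwz : w₀ ≠ z₀ := by
        intro hh
        subst hh
        exact hw'ne (hw₀min w' hw'z₀)
      have hw₀Sf : w₀ ∈ Sf := (hSf w₀).mpr ⟨hw₀z₀, hwz⟩
      have hw₀w' : w₀ ≠ w' := by
        intro hh
        exact hne' (hw₀un z' hmz' hz'A (hh ▸ hw'z')).symm
      have hw₀D2 : w₀ ∈ D2 := by
        rcases Finset.mem_union.mp (hdu ▸ hw₀Sf) with h | h
        · exfalso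
          rcases hd1 (Finset.mem_coe.mpr h) (Finset.mem_coe.mpr hw'D1) hw₀w' with hcomp | hcomp
          · exact hw₀w' (hw'min w₀ hcomp)
          · exact hw₀w' (hw₀min w' hcomp).symm
        · exact h
      exact TA.head_append_cons _ _ _ _
        (TA.head_of_min c2l h2s w₀ ((h2mem w₀).mpr hw₀D2) hw₀min)
    · -- base case : `z₀` is the only maximal element of `A`
      have hallz : ∀ z, TA.Mx z → z ∈ A → z = z₀ := by
        intro z hz hzA
        by_contra hne
        rcases (hconn z₀ z hmz₀ hz₀A hz hzA).cases_head with heq | ⟨c, hc', _⟩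
        · exact hne heq.symm
        · exact hnbr ⟨c, hc'⟩
      have hAcone : ∀ x : P, x ∈ A ↔ x ≤ z₀ := by
        intro x
        constructor
        · intro hx
          obtain ⟨z, hz, hzA, hxz⟩ := hyp2 x hx
          rw [hallz z hz hzA] at hxz
          exact hxz
        · exact hconeA x
      -- arrange the chains so that a designated element lies in `D2`
      have hswap : ∃ D1 D2 : Finset P, IsChain (· ≤ ·) (D1 : Set P) ∧
          IsChain (· ≤ ·) (D2 : Set P) ∧ D1 ∪ D2 = Sf ∧ Disjoint D1 D2 ∧
          (∀ w₀ ∈ wopt, w₀ ∈ Sf → w₀ ∈ D2) := by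
        rcases wopt with _ | w₀
        · exact ⟨C1, C2, hc1, hc2, hun, hdisj, by simp⟩
        · by_cases hw2 : w₀ ∈ C2
          · refine ⟨C1, C2, hc1, hc2, hun, hdisj, ?_⟩
            intro w hw _
            obtain rfl : w₀ = w := by simpa using hw
            exact hw2
          · refine ⟨C2, C1, hc2, hc1, by rw [Finset.union_comm]; exact hun, hdisj.symm, ?_⟩
            intro w hw hwSf
            obtain rfl : w₀ = w := by simpa using hw
            rcases Finset.mem_union.mp (hun ▸ hwSf) with h | h
            · exact h
            · exact absurd h hw2
      obtain ⟨D1, D2, hd1, hd2, hdu, hddisj, hwd2⟩ := hswap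
      obtain ⟨c1l, h1s, h1mem⟩ := TA.chain_to_list D1 hd1
      obtain ⟨c2l, h2s, h2mem⟩ := TA.chain_to_list D2 hd2
      have hD1Sf : D1 ⊆ Sf := hdu ▸ Finset.subset_union_left
      have hD2Sf : D2 ⊆ Sf := hdu ▸ Finset.subset_union_right
      have hgood := TA.assemble (A' := (∅ : Set P)) z₀ c2l c1l [] (fun _ => true)
        h2s h1s
        (fun x hx => hSflt x (hD2Sf ((h2mem x).mp hx)))
        (fun x hx => hSflt x (hD1Sf ((h1mem x).mp hx)))
        (fun x hx hx1 => by
          have hx2 : x ∈ D2 := (h2mem x).mp hx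
          have hx1' : x ∈ D1 := (h1mem x).mp hx1
          exact Finset.disjoint_left.mp hddisj.symm hx2 hx1')
        (TA.goodL_nil _)
        (fun h => rfl)
        (fun w hw => by simp at hw)
        (fun w hw => by simp at hw)
        (fun x _ y hy => by simp at hy)
        (fun y hy => by simp at hy)
        (fun x _ => by simp)
        (by
          intro x
          simp only [Set.mem_empty_iff_false, or_false]
          rw [hAcone x]
          constructor
          · rintro (hx | rfl | hx)
            · exact (hSflt x (hD2Sf ((h2mem x).mp hx))).le
            · exact le_rfl
            · exact (hSflt x (hD1Sf ((h1mem x).mp hx))).le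
          · intro hx
            by_cases hxz : x = z₀
            · exact Or.inr (Or.inl hxz)
            · have hxSf : x ∈ Sf := (hSf x).mpr ⟨hx, hxz⟩
              rcases Finset.mem_union.mp (hdu ▸ hxSf) with h | h
              · exact Or.inr (Or.inr ((h1mem x).mpr h))
              · exact Or.inl ((h2mem x).mpr h))
      refine ⟨_, _, hgood, ?_⟩
      intro w₀ hw₀
      obtain ⟨hw₀A, hw₀min, hw₀z₀, _⟩ := hwopt w₀ hw₀
      by_cases hwz : w₀ = z₀
      · -- the cone is trivial : c2l is empty
        have hSfe : ∀ x, x ∉ Sf := by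
          intro x hx
          have h1 := (hSf x).mp hx
          exact h1.2 (hwz ▸ hw₀min x (hwz ▸ h1.1))
        have hc2e : c2l = [] := by
          cases hc : c2l with
          | nil => rfl
          | cons a t =>
            exfalso
            exact hSfe a (hD2Sf ((h2mem a).mp (hc ▸ List.mem_cons_self (a := a) (l := t))))
        rw [hc2e]
        simp [hwz]
      · have hw₀Sf : w₀ ∈ Sf := (hSf w₀).mpr ⟨hw₀z₀, hwz⟩
        have hw₀c2 : w₀ ∈ c2l := (h2mem w₀).mpr (hwd2 w₀ hw₀ hw₀Sf)
        exact TA.head_append_cons _ _ _ _ (TA.head_of_min c2l h2s w₀ hw₀c2 hw₀min)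

theorem TA.exists_good [Nonempty P] (hA : IsTypeA (fun x y : P => x ≤ y)) :
    ∃ (L : List P) (o : ℕ → Bool), TA.GoodL (Set.univ : Set P) L o := by
  classical
  obtain ⟨hconn, hR1, hR2, hR3, hcr⟩ := hA
  have hconnU := TA.nbr_conn_univ hconn
  obtain ⟨zz, hzz, _⟩ := TA.exists_mx (Classical.arbitrary P)
  obtain ⟨z₀, hmz₀, _, hend⟩ := TA.exists_endpoint hR2 hR3 hcr
    (fun z z' a _ c _ => hconnU z z' a c) hzz trivial
  obtain ⟨L, o, hg, _⟩ := TA.main hR1 hR2 hR3 hcr (Set.univ : Set P).ncard Set.univ le_rfl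
    (fun _ _ _ _ => trivial)
    (fun x _ => by
      obtain ⟨z, hz, hxz⟩ := TA.exists_mx x
      exact ⟨z, hz, trivial, hxz⟩)
    (fun z z' hz _ hz' _ => hconnU z z' hz hz')
    z₀ hmz₀ trivial hend none (by simp)
  exact ⟨L, o, hg⟩

end TAProof

/-- Every poset of type `A` with `n` elements is order-isomorphic
to the poset `P_{Q^F}` for some quiver `Q` of type `A_n` and alien set `F` for `Q`. -/
theorem typeA_poset_is_realized_by_typeA_quiver {P : Type*} [Fintype P] [PartialOrder P]
    {n : ℕ} (hn : 1 ≤ n) (hcard : Fintype.card P = n)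
    (hA : IsTypeA (fun x y : P => x ≤ y)) :
    ∃ (Q : TypeAQuiver n) (F : Set (Fin n × Fin n)), IsAlienSet Q F ∧
      ∃ e : P ≃ Fin n, ∀ x y : P, x ≤ y ↔ leQF Q F (e x) (e y) := by
  have hnp : Nonempty P := by
    rw [← Fintype.card_pos_iff]; omega
  obtain ⟨L, o, hg⟩ := TA.exists_good hA
  exact TA.good_realizes hcard hg
end

section
/- Let P be a poset of type A with at least two maximal elements, and let z and z' be distinct maximal elements of P. Then z and z' are neighbors (i.e., D(z) ∩ D(z') ≠ ∅) if and only if D(z) ∩ D(z') = {x} for some minimal element x of P. -/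
/-- In a poset of type `A` with at least two maximal elements, two
distinct maximal elements `z, z'` are neighbors iff `D(z) ∩ D(z') = {x}` for some
minimal element `x`. -/
theorem neighbors_iff_downcones_meet_in_unique_min {P : Type*} [Fintype P] [PartialOrder P]
    (hA : IsTypeA (fun x y : P => x ≤ y))
    (htwo : ∃ z w : P, RIsMax (fun x y : P => x ≤ y) z ∧
      RIsMax (fun x y : P => x ≤ y) w ∧ z ≠ w)
    (z z' : P) (hz : RIsMax (fun x y : P => x ≤ y) z)
    (hz' : RIsMax (fun x y : P => x ≤ y) z') (hne : z ≠ z') :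
    (RDown (fun x y : P => x ≤ y) z ∩ RDown (fun x y : P => x ≤ y) z').Nonempty ↔
      ∃ x : P, RIsMin (fun x y : P => x ≤ y) x ∧
        RDown (fun x y : P => x ≤ y) z ∩ RDown (fun x y : P => x ≤ y) z' = {x} := by
  constructor
  · rintro ⟨x, hxz, hxz'⟩
    have hxz : x ≤ z := hxz
    have hxz' : x ≤ z' := hxz'
    have strict : ∀ w : P, w ≤ z → w ≤ z' → w < z ∧ w < z' := by
      intro w h1 h2
      constructor
      · refine lt_of_le_of_ne h1 fun h => hne ?_
        exact le_antisymm (h ▸ h2) (hz z' (h ▸ h2))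
      · refine lt_of_le_of_ne h2 fun h => hne ?_
        exact le_antisymm (hz' z (h ▸ h1)) (h ▸ h1)
    have hmin : ∀ w : P, w ≤ z → w ≤ z' → RIsMin (fun x y : P => x ≤ y) w := by
      intro w h1 h2 y hy
      by_contra hwy
      exact hA.2.2.1 ⟨z, z', y, w, hz, hz', hne, ⟨hy, hwy⟩,
        ⟨h1, ((strict w h1 h2).1).not_ge⟩, ⟨h2, ((strict w h1 h2).2).not_ge⟩⟩
    have huniq : ∀ w w' : P, w ≤ z → w ≤ z' → w' ≤ z → w' ≤ z' → w = w' := by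
      intro w w' hw1 hw2 hw'1 hw'2
      by_contra hww
      have hinc : RIncomp (fun x y : P => x ≤ y) w w' := by
        constructor
        · intro h; exact hww (le_antisymm h (hmin w' hw'1 hw'2 w h))
        · intro h; exact hww (le_antisymm (hmin w hw1 hw2 w' h) h)
      have hsw := strict w hw1 hw2
      have hsw' := strict w' hw'1 hw'2
      refine hA.2.2.2.2 0 ⟨![z, z'], ![w, w'], ?_, ?_, ?_, ?_, ?_, ?_⟩
      · intro i j h
        fin_cases i <;> fin_cases j <;> simp_all
      · intro i j h
        fin_cases i <;> fin_cases j <;> simp_all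
      · intro j; fin_cases j <;> simpa
      · intro i j
        fin_cases i <;> fin_cases j <;>
          simp [Matrix.cons_val_zero, Matrix.cons_val_one] <;>
          first
            | exact hsw.1.ne
            | exact hsw.2.ne
            | exact hsw'.1.ne
            | exact hsw'.2.ne
      · intro i j hij
        fin_cases i <;> fin_cases j <;> simp_all <;>
          first
            | exact hinc
            | exact ⟨hinc.2, hinc.1⟩
      · intro i j
        have hrhs : j = i ∨ j = i - 1 := by revert i j; decide
        refine ⟨fun _ => hrhs, fun _ => ?_⟩
        fin_cases i <;> fin_cases j <;>
          simp [Matrix.cons_val_zero, Matrix.cons_val_one, RLt] <;>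
          first
            | exact ⟨hsw.1.le, hsw.1.not_ge⟩
            | exact ⟨hsw.2.le, hsw.2.not_ge⟩
            | exact ⟨hsw'.1.le, hsw'.1.not_ge⟩
            | exact ⟨hsw'.2.le, hsw'.2.not_ge⟩
    refine ⟨x, hmin x hxz hxz', ?_⟩
    ext w
    simp only [Set.mem_inter_iff, Set.mem_singleton_iff]
    constructor
    · rintro ⟨h1, h2⟩
      exact huniq w x h1 h2 hxz hxz'
    · rintro rfl
      exact ⟨hxz, hxz'⟩
  · rintro ⟨x, _, hx⟩
    rw [hx]
    exact Set.singleton_nonempty x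
end

section
/- Let P be a finite poset that contains neither R2 nor the crown R_{4,0} as a peak-subposet, and let z and z' be distinct maximal elements of P. Then D(z) ∩ D(z') contains at most one element. -/
/-- In a finite poset containing neither `R2` nor the crown
`R_{4,0}` as a peak-subposet, the intersection of the down-cones of two distinct
maximal elements has at most one element. -/
theorem inter_downcones_subsingleton {P : Type*} [Fintype P] [PartialOrder P]
    (hR2 : ¬ ContainsR2 (fun x y : P => x ≤ y))
    (hR40 : ¬ ContainsCrown (fun x y : P => x ≤ y) 0)
    (z z' : P) (hz : RIsMax (fun x y : P => x ≤ y) z)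
    (hz' : RIsMax (fun x y : P => x ≤ y) z') (hne : z ≠ z') :
    (RDown (fun x y : P => x ≤ y) z ∩ RDown (fun x y : P => x ≤ y) z').Subsingleton := by
  intro a ha b hb
  by_contra hab
  have hzz' : ¬ z ≤ z' := fun h => hne (le_antisymm h (hz z' h))
  have hlt : ∀ c : P, c ≤ z → c ≤ z' →
      RLt (fun x y : P => x ≤ y) c z ∧ RLt (fun x y : P => x ≤ y) c z' := by
    intro c h1 h2
    exact ⟨⟨h1, fun h => hzz' (h.trans h2)⟩, ⟨h2, fun h => hzz' (hz' z (h.trans h1))⟩⟩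
  obtain ⟨haz, haz'⟩ := hlt a ha.1 ha.2
  obtain ⟨hbz, hbz'⟩ := hlt b hb.1 hb.2
  have hinc : RIncomp (fun x y : P => x ≤ y) a b := by
    constructor
    · intro h
      exact hR2 ⟨z, z', a, b, hz, hz', hne, ⟨h, fun h' => hab (le_antisymm h h')⟩, hbz, hbz'⟩
    · intro h
      exact hR2 ⟨z, z', b, a, hz, hz', hne, ⟨h, fun h' => hab (le_antisymm h' h)⟩, haz, haz'⟩
  apply hR40
  refine ⟨![z, z'], ![a, b], ?_, ?_, ?_, ?_, ?_, ?_⟩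
  · intro i j h
    fin_cases i <;> fin_cases j <;> simp_all
  · intro i j h
    fin_cases i <;> fin_cases j <;> simp_all
  · intro j; fin_cases j <;> assumption
  · intro i j
    fin_cases i <;> fin_cases j <;> simp <;> intro h <;> subst h
    · exact haz.2 le_rfl
    · exact haz'.2 le_rfl
    · exact hbz.2 le_rfl
    · exact hbz'.2 le_rfl
  · intro i j hij
    fin_cases i <;> fin_cases j <;> simp_all
    exact ⟨hinc.2, hinc.1⟩
  · intro i j
    have h2 : j = i ∨ j = i - 1 := by fin_cases i <;> fin_cases j <;> decide
    simp only [h2, iff_true]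
    fin_cases i <;> fin_cases j <;> assumption
end

section
/- Let P be a finite poset with at least two maximal elements that contains none of R1, R2, and R3 as a peak-subposet. Then every maximal element z of P has at most two neighbors; that is, there are at most two maximal elements z' ≠ z with D(z) ∩ D(z') ≠ ∅. -/
/-- In a finite poset with at least two maximal elements containing
none of `R1`, `R2`, `R3` as a peak-subposet, every maximal element has at most two
neighbors. -/
theorem at_most_two_neighbors {P : Type*} [Fintype P] [PartialOrder P]
    (htwo : ∃ z w : P, RIsMax (fun x y : P => x ≤ y) z ∧
      RIsMax (fun x y : P => x ≤ y) w ∧ z ≠ w)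
    (hR1 : ¬ ContainsR1 (fun x y : P => x ≤ y))
    (hR2 : ¬ ContainsR2 (fun x y : P => x ≤ y))
    (hR3 : ¬ ContainsR3 (fun x y : P => x ≤ y)) :
    ∀ z : P, RIsMax (fun x y : P => x ≤ y) z →
      (NeighborSet (fun x y : P => x ≤ y) z).ncard ≤ 2 := by
  intro z hz
  by_contra h
  push_neg at h
  rw [Set.two_lt_ncard (Set.toFinite _)] at h
  obtain ⟨z1, hz1, z2, hz2, z3, hz3, h12, h13, h23⟩ := h
  obtain ⟨hm1, hne1, x1, hx1z, hx1⟩ := hz1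
  obtain ⟨hm2, hne2, x2, hx2z, hx2⟩ := hz2
  obtain ⟨hm3, hne3, x3, hx3z, hx3⟩ := hz3
  simp only [RDown, Set.mem_setOf_eq] at hx1z hx1 hx2z hx2 hx3z hx3
  -- x < z' strictly for any maximal z' ≠ z with x ≤ z and x ≤ z'
  have keyi : ∀ (x zi : P), RIsMax (fun x y : P => x ≤ y) zi → zi ≠ z → x ≤ z → x ≤ zi →
      RLt (fun x y : P => x ≤ y) x zi := by
    intro x zi hmi hnei hxz hxle
    refine ⟨hxle, fun hle => hnei ?_⟩
    have h1 : zi ≤ z := hle.trans hxz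
    exact le_antisymm h1 (hmi z h1)
  have key1 := keyi x1 z1 hm1 hne1 hx1z hx1
  have key2 := keyi x2 z2 hm2 hne2 hx2z hx2
  have key3 := keyi x3 z3 hm3 hne3 hx3z hx3
  -- x < z strictly
  have keyz : ∀ (x zi : P), zi ≠ z → x ≤ z → x ≤ zi → RLt (fun x y : P => x ≤ y) x z := by
    intro x zi hnei hxz hxle
    refine ⟨hxz, fun hle => hnei ?_⟩
    have h1 : z ≤ zi := hle.trans hxle
    exact le_antisymm (hz zi h1) h1
  have keyz1 := keyz x1 z1 hne1 hx1z hx1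
  have keyz2 := keyz x2 z2 hne2 hx2z hx2
  have keyz3 := keyz x3 z3 hne3 hx3z hx3
  -- the x's are pairwise distinct (else R3)
  have hxne : ∀ (a b : P) (za zb : P), za ≠ zb → za ≠ z → zb ≠ z →
      RIsMax (fun x y : P => x ≤ y) za → RIsMax (fun x y : P => x ≤ y) zb →
      RLt (fun x y : P => x ≤ y) a z → RLt (fun x y : P => x ≤ y) a za →
      RLt (fun x y : P => x ≤ y) b zb → a ≠ b := by
    intro a b za zb hab haz hbz hma hmb h1 h2 h3 heq
    subst heq
    exact hR3 ⟨z, za, zb, a, hz, hma, hmb, (Ne.symm haz), (Ne.symm hbz), hab, h1, h2, h3⟩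
  have hx12 : x1 ≠ x2 := hxne x1 x2 z1 z2 h12 hne1 hne2 hm1 hm2 keyz1 key1 key2
  have hx13 : x1 ≠ x3 := hxne x1 x3 z1 z3 h13 hne1 hne3 hm1 hm3 keyz1 key1 key3
  have hx23 : x2 ≠ x3 := hxne x2 x3 z2 z3 h23 hne2 hne3 hm2 hm3 keyz2 key2 key3
  -- the x's are pairwise incomparable (else R2)
  have hinc : ∀ (a b : P) (zb : P), a ≠ b → zb ≠ z →
      RIsMax (fun x y : P => x ≤ y) zb →
      RLt (fun x y : P => x ≤ y) b z → RLt (fun x y : P => x ≤ y) b zb →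
      ¬ a ≤ b := by
    intro a b zb hab hbz hmb h1 h2 hle
    exact hR2 ⟨z, zb, a, b, hz, hmb, Ne.symm hbz,
      ⟨hle, fun h => hab (le_antisymm hle h)⟩, h1, h2⟩
  have i12 : RIncomp (fun x y : P => x ≤ y) x1 x2 :=
    ⟨hinc x1 x2 z2 hx12 hne2 hm2 keyz2 key2, hinc x2 x1 z1 hx12.symm hne1 hm1 keyz1 key1⟩
  have i13 : RIncomp (fun x y : P => x ≤ y) x1 x3 :=
    ⟨hinc x1 x3 z3 hx13 hne3 hm3 keyz3 key3, hinc x3 x1 z1 hx13.symm hne1 hm1 keyz1 key1⟩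
  have i23 : RIncomp (fun x y : P => x ≤ y) x2 x3 :=
    ⟨hinc x2 x3 z3 hx23 hne3 hm3 keyz3 key3, hinc x3 x2 z2 hx23.symm hne2 hm2 keyz2 key2⟩
  exact hR1 ⟨z, x1, x2, x3, hz, hx12, hx13, hx23, i12, i13, i23, keyz1, keyz2, keyz3⟩
end

section
/- Let P be a finite connected poset with at least two maximal elements that contains none of R1, R2, and R3 as a peak-subposet. If every maximal element of P has exactly two neighbors, then P contains the crown R_{4,n} as a peak-subposet for some n ≥ 0. -/
/-- Let `P` be a finite connected poset with at least two maximal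
elements containing none of `R1`, `R2`, `R3` as a peak-subposet. If every maximal
element has exactly two neighbors, then `P` contains a crown `R_{4,n}` as a
peak-subposet. -/
theorem crown_of_all_maximal_have_two_neighbors {P : Type*} [Fintype P] [PartialOrder P]
    (hconn : RConnected (fun x y : P => x ≤ y))
    (htwo : ∃ z w : P, RIsMax (fun x y : P => x ≤ y) z ∧
      RIsMax (fun x y : P => x ≤ y) w ∧ z ≠ w)
    (hR1 : ¬ ContainsR1 (fun x y : P => x ≤ y))
    (hR2 : ¬ ContainsR2 (fun x y : P => x ≤ y))
    (hR3 : ¬ ContainsR3 (fun x y : P => x ≤ y))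
    (hall : ∀ z : P, RIsMax (fun x y : P => x ≤ y) z →
      (NeighborSet (fun x y : P => x ≤ y) z).ncard = 2) :
    ∃ n : ℕ, ContainsCrown (fun x y : P => x ≤ y) n := by
  classical
  set le : P → P → Prop := fun x y : P => x ≤ y with hledef
  have memN : ∀ z z' : P, z' ∈ NeighborSet le z ↔
      (RIsMax le z' ∧ z' ≠ z ∧ ∃ c, le c z ∧ le c z') := fun _ _ => Iff.rfl
  have symmN : ∀ z z' : P, RIsMax le z → z' ∈ NeighborSet le z → z ∈ NeighborSet le z' := by
    intro z z' hz h
    obtain ⟨h1, h2, c, hc1, hc2⟩ := (memN z z').1 h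
    exact (memN z' z).2 ⟨hz, h2.symm, c, hc2, hc1⟩
  have pairN : ∀ z : P, RIsMax le z → ∃ a b : P, a ≠ b ∧ NeighborSet le z = {a, b} :=
    fun z hz => Set.ncard_eq_two.mp (hall z hz)
  have hotherE : ∀ z a : P, ∃ b : P, RIsMax le z → a ∈ NeighborSet le z →
      b ∈ NeighborSet le z ∧ b ≠ a ∧ ∀ c ∈ NeighborSet le z, c ≠ a → c = b := by
    intro z a
    by_cases hz : RIsMax le z
    · by_cases ha : a ∈ NeighborSet le z
      · obtain ⟨u, v, huv, hN⟩ := pairN z hz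
        rw [hN] at ha
        simp only [Set.mem_insert_iff, Set.mem_singleton_iff] at ha
        rcases ha with rfl | rfl
        · refine ⟨v, fun _ _ => ⟨?_, Ne.symm huv, ?_⟩⟩
          · rw [hN]; exact Set.mem_insert_iff.2 (Or.inr rfl)
          · intro c hc hca
            rw [hN] at hc
            simp only [Set.mem_insert_iff, Set.mem_singleton_iff] at hc
            rcases hc with rfl | rfl
            · exact absurd rfl hca
            · rfl
        · refine ⟨u, fun _ _ => ⟨?_, huv, ?_⟩⟩
          · rw [hN]; exact Set.mem_insert _ _
          · intro c hc hca
            rw [hN] at hc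
            simp only [Set.mem_insert_iff, Set.mem_singleton_iff] at hc
            rcases hc with rfl | rfl
            · rfl
            · exact absurd rfl hca
      · exact ⟨z, fun _ h => absurd h ha⟩
    · exact ⟨z, fun h => absurd h hz⟩
  choose other hother using hotherE
  obtain ⟨z0, w0, hz0, hw0, -⟩ := htwo
  obtain ⟨u0, v0, huv0, hN0⟩ := pairN z0 hz0
  have hu0 : u0 ∈ NeighborSet le z0 := by rw [hN0]; exact Set.mem_insert _ _
  set f : P × P → P × P := fun q => (q.2, other q.2 q.1) with hfdef
  set p : ℕ → P × P := fun k => f^[k] (z0, u0) with hpdef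
  set seq : ℕ → P := fun k => (p k).1 with hseqdef
  have hpsucc : ∀ k, p (k+1) = f (p k) := by
    intro k
    rw [hpdef]
    exact Function.iterate_succ_apply' f k _
  have hp : ∀ k, RIsMax le (p k).2 ∧ (p k).1 ∈ NeighborSet le (p k).2 := by
    intro k
    induction k with
    | zero =>
      have h0 : p 0 = (z0, u0) := rfl
      rw [h0]
      exact ⟨((memN z0 u0).1 hu0).1, symmN z0 u0 hz0 hu0⟩
    | succ k ih =>
      rw [hpsucc k, hfdef]
      obtain ⟨h2, h1⟩ := ih
      obtain ⟨hb1, hb2, hb3⟩ := hother (p k).2 (p k).1 h2 h1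
      exact ⟨((memN _ _).1 hb1).1, symmN _ _ h2 hb1⟩
  have hseq1 : ∀ k, seq (k+1) = (p k).2 := by
    intro k
    rw [hseqdef]
    show (p (k+1)).1 = (p k).2
    rw [hpsucc k, hfdef]
  have hmem : ∀ k, seq k ∈ NeighborSet le (seq (k+1)) := by
    intro k; rw [hseq1 k]; exact (hp k).2
  have hmax : ∀ k, RIsMax le (seq k) := fun k => ((memN _ _).1 (hmem k)).1
  have hne1 : ∀ k, seq k ≠ seq (k+1) := fun k => ((memN _ _).1 (hmem k)).2.1
  have hseq2 : ∀ k, seq (k+2) = other (seq (k+1)) (seq k) := by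
    intro k
    have h1 : (p (k+1)).2 = other (p k).2 (p k).1 := by rw [hpsucc k, hfdef]
    rw [hseq1 (k+1), h1, ← hseq1 k]
  have hstep : ∀ k, seq (k+2) ∈ NeighborSet le (seq (k+1)) ∧ seq (k+2) ≠ seq k ∧
      ∀ c ∈ NeighborSet le (seq (k+1)), c ≠ seq k → c = seq (k+2) := by
    intro k
    have h := hother (seq (k+1)) (seq k) (hmax (k+1)) (hmem k)
    rwa [← hseq2 k] at h
  have hex : ∃ l, 0 < l ∧ ∃ k, k < l ∧ seq k = seq l := by
    obtain ⟨a, b, hab, h⟩ := Finite.exists_ne_map_eq_of_infinite seq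
    rcases Nat.lt_or_ge a b with h' | h'
    · exact ⟨b, by omega, a, h', h⟩
    · exact ⟨a, by omega, b, by omega, h.symm⟩
  obtain ⟨hl0, k0, hkl, hk⟩ := Nat.find_spec hex
  have hmin : ∀ j j' : ℕ, j < j' → j' < Nat.find hex → seq j ≠ seq j' := by
    intro j j' h1 h2 he
    exact Nat.find_min hex h2 ⟨by omega, j, h1, he⟩
  have hk0 : k0 = 0 := by
    by_contra hk0ne
    obtain ⟨k1, rfl⟩ : ∃ k1, k0 = k1 + 1 := ⟨k0 - 1, by omega⟩
    obtain ⟨l1, hl1⟩ : ∃ l1, Nat.find hex = l1 + 1 := ⟨Nat.find hex - 1, by omega⟩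
    have hkl1 : k1 + 1 < l1 + 1 := by omega
    have hm : seq l1 ∈ NeighborSet le (seq (k1+1)) := by
      have h := hmem l1
      rw [← hl1, ← hk] at h
      exact h
    by_cases hc : seq l1 = seq k1
    · exact hmin k1 l1 (by omega) (by omega) hc.symm
    · have h2 := (hstep k1).2.2 (seq l1) hm hc
      rcases Nat.lt_trichotomy (k1 + 2) l1 with h3 | h3 | h3
      · exact hmin (k1+2) l1 h3 (by omega) h2.symm
      · -- l1 = k1 + 2 : then seq (k1+3) = seq (k1+1)
        have h4 : seq (k1+1+2) = seq (k1+1) := by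
          rw [(by omega : k1 + 1 + 2 = l1 + 1), ← hl1, ← hk]
        exact (hstep (k1+1)).2.1 h4
      · -- k1 + 2 > l1, so k1+2 = l1+1, l1 = k1+1
        have h5 : l1 = k1 + 1 := by omega
        rw [h5] at h2
        exact hne1 (k1+1) h2
  subst hk0
  have hl3 : 3 ≤ Nat.find hex := by
    by_contra h
    rcases (by omega : Nat.find hex = 1 ∨ Nat.find hex = 2) with h1 | h1
    · rw [h1] at hk; exact hne1 0 hk
    · rw [h1] at hk; exact (hstep 0).2.1 hk.symm
  obtain ⟨n, hn⟩ : ∃ n, Nat.find hex = n + 3 := ⟨Nat.find hex - 3, by omega⟩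
  rw [hn] at hk hmin
  -- hk : seq 0 = seq (n+3), hmin : distinctness below n+3
  set zf : Fin (n+3) → P := fun i => seq i.val with hzf
  have hwrap : ∀ j : Fin (n+3), seq (j.val + 1) = zf (j+1) := by
    intro j
    rw [hzf]
    show seq (j.val + 1) = seq ((j + 1 : Fin (n+3)).val)
    rcases Nat.lt_or_ge (j.val + 1) (n+3) with h | h
    · have hv : ((j+1 : Fin (n+3))).val = j.val + 1 := by
        rw [Fin.add_def, Fin.val_one]
        exact Nat.mod_eq_of_lt h
      rw [hv]
    · have hj : j.val = n + 2 := by have := j.isLt; omega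
      have hv : ((j+1 : Fin (n+3))).val = 0 := by
        rw [Fin.add_def, Fin.val_one]
        simp only [hj]
        rw [show n + 2 + 1 = n + 3 from rfl, Nat.mod_self]
      rw [hj, hv]
      exact hk.symm
  have hsub_add : ∀ i : Fin (n+3), i - 1 + 1 = i := fun i => sub_add_cancel i 1
  have hione : ∀ i : Fin (n+3), i - 1 ≠ i := by
    intro i h
    have h1 := congrArg (· + 1) h
    simp only [sub_add_cancel] at h1
    have h2 := left_eq_add.mp h1
    simp [Fin.ext_iff] at h2
  have hitwo : ∀ i : Fin (n+3), i - 1 - 1 ≠ i := by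
    intro i h
    have h1 := congrArg (· + 1 + 1) h
    simp only [sub_add_cancel] at h1
    rw [add_assoc] at h1
    have h2 := left_eq_add.mp h1
    have h3 : ((1:Fin (n+3)) + 1).val = 0 := by rw [h2]; rfl
    rw [Fin.add_def, Fin.val_one] at h3
    simp only [Fin.val_mk, Nat.mod_eq_of_lt (show 1+1 < n+3 by omega)] at h3
    omega
  have hxE : ∀ i : Fin (n+3), ∃ c : P, le c (zf (i-1)) ∧ le c (zf i) := by
    intro i
    obtain ⟨hm, hne', c, hc1, hc2⟩ := (memN _ _).1 (hmem ((i - 1 : Fin (n+3))).val)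
    refine ⟨c, hc2, ?_⟩
    rw [hwrap (i-1), hsub_add i] at hc1
    exact hc1
  choose xf hx1 hx2 using hxE
  have hzinj : Function.Injective zf := by
    intro i j hij
    by_contra hne'
    have hv : i.val ≠ j.val := fun h => hne' (Fin.ext h)
    rcases Nat.lt_or_ge i.val j.val with h | h
    · exact hmin i.val j.val h j.isLt hij
    · exact hmin j.val i.val (by omega) i.isLt hij.symm
  have hzmax : ∀ j : Fin (n+3), RIsMax le (zf j) := fun j => hmax j.val
  have h1ne : ∀ i : Fin (n+3), zf (i-1) ≠ zf i := fun i h => hione i (hzinj h)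
  have hxnez : ∀ i j : Fin (n+3), xf i ≠ zf j := by
    intro i j he
    have h1 : le (zf j) (zf i) := by rw [← he]; exact hx2 i
    have h2 : le (zf j) (zf (i-1)) := by rw [← he]; exact hx1 i
    have e1 : zf j = zf i := le_antisymm h1 (hzmax j (zf i) h1)
    have e2 : zf j = zf (i-1) := le_antisymm h2 (hzmax j (zf (i-1)) h2)
    exact h1ne i (e2.symm.trans e1)
  have hxlt : ∀ i j : Fin (n+3), le (xf i) (zf j) → RLt le (xf i) (zf j) :=
    fun i j h => ⟨h, fun h' => hxnez i j (le_antisymm h h')⟩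
  have hR3' : ∀ (x : P) (a b c : Fin (n+3)), a ≠ b → a ≠ c → b ≠ c →
      le x (zf a) → le x (zf b) → le x (zf c) → False := by
    intro x a b c hab hac hbc h1 h2 h3
    have hne' : ∀ d e : Fin (n+3), d ≠ e → le x (zf d) → le x (zf e) → ¬ le (zf d) x := by
      intro d e hde hd he hdx
      have e1 : x = zf d := le_antisymm hd hdx
      have h4 : le (zf d) (zf e) := by rw [← e1]; exact he
      exact hde (hzinj (le_antisymm h4 (hzmax d (zf e) h4)))
    exact hR3 ⟨zf a, zf b, zf c, x, hzmax a, hzmax b, hzmax c,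
      fun h => hab (hzinj h), fun h => hac (hzinj h), fun h => hbc (hzinj h),
      ⟨h1, hne' a b hab h1 h2⟩, ⟨h2, hne' b a hab.symm h2 h1⟩, ⟨h3, hne' c a hac.symm h3 h1⟩⟩
  have hnle : ∀ i j : Fin (n+3), i ≠ j → ¬ le (xf i) (xf j) := by
    intro i j hij hle'
    rcases eq_or_lt_of_le (hle' : (xf i : P) ≤ xf j) with heq | hlt
    · by_cases hji : j = i - 1
      · subst hji
        refine hR3' (xf i) i (i-1) (i-1-1) (Ne.symm (hione i)) (Ne.symm (hitwo i))
          (Ne.symm (hione (i-1))) (hx2 i) (hx1 i) ?_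
        rw [heq]; exact hx1 (i-1)
      · exact hR3' (xf i) i (i-1) j (Ne.symm (hione i)) hij (fun h => hji h.symm)
          (hx2 i) (hx1 i) (by rw [heq]; exact hx2 j)
    · exact hR2 ⟨zf j, zf (j-1), xf i, xf j, hzmax j, hzmax (j-1),
        fun h => hione j (hzinj h.symm), ⟨hle', not_le_of_gt hlt⟩,
        hxlt j j (hx2 j), hxlt j (j-1) (hx1 j)⟩
  have hxinj : Function.Injective xf := by
    intro i j h
    by_contra hne'
    exact hnle i j hne' (le_of_eq h)
  have hincomp : ∀ i j : Fin (n+3), i ≠ j → RIncomp le (xf i) (xf j) :=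
    fun i j hij => ⟨hnle i j hij, hnle j i (Ne.symm hij)⟩
  have hiff : ∀ i j : Fin (n+3), RLt le (xf i) (zf j) ↔ (j = i ∨ j = i - 1) := by
    intro i j
    constructor
    · rintro ⟨h1, -⟩
      by_contra hnot
      push_neg at hnot
      exact hR3' (xf i) i (i-1) j (Ne.symm (hione i)) (Ne.symm hnot.1)
        (Ne.symm hnot.2) (hx2 i) (hx1 i) h1
    · rintro (rfl | rfl)
      · exact hxlt j j (hx2 j)
      · exact hxlt i (i-1) (hx1 i)
  exact ⟨n + 1, zf, xf, hzinj, hxinj, hzmax, hxnez, hincomp, hiff⟩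
end

section
/- Let Q be a quiver of type A_n (n ≥ 1) and let F be an alien set for Q. Then the maximal elements of the associated poset P_{Q^F} are exactly the sink vertices of Q; in particular, no arrow of F starts at a sink of Q, and the sinks of Q^F coincide with the sinks of Q. -/
/-- For a quiver `Q` of type `A_n` (`n ≥ 1`) and an alien set `F`
for `Q`: the maximal elements of the poset `P_{Q^F}` are exactly the sinks of `Q`;
no arrow of `F` starts at a sink of `Q`; and the sinks of `Q^F` coincide with the
sinks of `Q`. -/
theorem max_of_leQF_iff_sink {n : ℕ} (hn : 1 ≤ n)
    (Q : TypeAQuiver n) (F : Set (Fin n × Fin n)) (hF : IsAlienSet Q F) :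
    (∀ z : Fin n, RIsMax (leQF Q F) z ↔ IsSinkQ Q z) ∧
    (∀ p ∈ F, ¬ IsSinkQ Q p.1) ∧
    (∀ z : Fin n, (∀ y, ¬ QFarr Q F z y) ↔ IsSinkQ Q z) := by
  have h2 : ∀ p ∈ F, ¬ IsSinkQ Q p.1 := by
    rintro ⟨a, b⟩ hp hsink
    obtain ⟨z, hz, hA, hB⟩ := hF.sameSupp _ hp
    have haz : a = z := by
      rcases Relation.ReflTransGen.cases_head hA with h | ⟨c, hc, _⟩
      · exact h
      · exact absurd hc (hsink c)
    subst haz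
    exact hF.acyclic a (Relation.TransGen.head' (Or.inr hp)
      (Relation.ReflTransGen.mono (fun x y h => Or.inl h) _ _ hB))
  have h3 : ∀ z : Fin n, (∀ y, ¬ QFarr Q F z y) ↔ IsSinkQ Q z := by
    intro z
    constructor
    · intro h y hy; exact h y (Or.inl hy)
    · rintro hs y (h | h)
      · exact hs y h
      · exact h2 (z, y) h hs
  refine ⟨fun z => ⟨?_, ?_⟩, h2, h3⟩
  · intro hmax y hy
    have hle : leQF Q F z y := Relation.ReflTransGen.single (Or.inl hy)
    exact hF.acyclic z (Relation.TransGen.head' (Or.inl hy) (hmax y hle))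
  · intro hs x hx
    rcases Relation.ReflTransGen.cases_head hx with h | ⟨c, hc, _⟩
    · subst h; exact Relation.ReflTransGen.refl
    · exact absurd hc ((h3 z).mpr hs c)
end
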